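/- arXiv:2512.00788 — 10 statements merged into one kernel-verified Lean document; each statement's English description precedes it below -/
import Mathlib

section
/- Let N be a natural number, let ι and κ be finite index types, let S_B : ι → Finset (Fin N), S_C : κ → Finset (Fin N), and let h : ι → Matrix n n ℂ and h' : κ → Matrix n n ℂ be families of matrices such that Commute (h a) (h' b) whenever S_B a ∩ S_C b = ∅. Suppose g_B, g_C ≥ 0 satisfy: for every site i : Fin N, ∑_{a : i ∈ S_B a} ‖h a‖ ≤ g_B and ∑_{b : i ∈ S_C b} ‖h' b‖ ≤ g_C. Then ‖⁅∑_a h a, ∑_b h' b⁆‖ ≤ 2 * N * g_B * g_C. In particular, if both Hamiltonians are g-extensive with g of order one, the maximal instantaneous charging power can scale at most extensively with system size, irrespective of the interaction order. -/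
open Finset
open scoped Matrix.Norms.L2Operator

/-- If the battery terms `h a` (supported on `S_B a`) and charger
terms `h' b` (supported on `S_C b`) commute whenever their supports are disjoint,
and both Hamiltonians are `g`-extensive with constants `g_B`, `g_C`, then the
commutator of the total Hamiltonians is bounded by `2 * N * g_B * g_C`; hence the
maximal instantaneous charging power scales at most extensively with system size. -/
theorem commutator_le_of_g_extensive
    (N : ℕ) {n : Type*} [Fintype n] [DecidableEq n] [Nonempty n]
    (ι κ : Type*) [Fintype ι] [Fintype κ]
    (S_B : ι → Finset (Fin N)) (S_C : κ → Finset (Fin N))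
    (h : ι → Matrix n n ℂ) (h' : κ → Matrix n n ℂ)
    (hcomm : ∀ a b, S_B a ∩ S_C b = ∅ → Commute (h a) (h' b))
    (g_B g_C : ℝ) (hgB : 0 ≤ g_B) (hgC : 0 ≤ g_C)
    (hB : ∀ i : Fin N, ∑ a ∈ Finset.univ.filter (fun a => i ∈ S_B a), ‖h a‖ ≤ g_B)
    (hC : ∀ i : Fin N, ∑ b ∈ Finset.univ.filter (fun b => i ∈ S_C b), ‖h' b‖ ≤ g_C) :
    ‖⁅∑ a, h a, ∑ b, h' b⁆‖ ≤ 2 * N * g_B * g_C := by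
  classical
  set P : Finset (ι × κ) :=
    Finset.univ.filter (fun p : ι × κ => (S_B p.1 ∩ S_C p.2).Nonempty) with hPdef
  -- Step 1: expand the commutator as a sum over pairs with intersecting supports.
  have e1 : (∑ a, h a) * (∑ b, h' b) = ∑ p : ι × κ, h p.1 * h' p.2 := by
    rw [Finset.sum_mul_sum, ← Finset.univ_product_univ, Finset.sum_product]
  have e2 : (∑ b, h' b) * (∑ a, h a) = ∑ p : ι × κ, h' p.2 * h p.1 := by
    rw [Finset.sum_mul_sum, Finset.sum_comm, ← Finset.univ_product_univ, Finset.sum_product]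
  have hsplit : ⁅∑ a, h a, ∑ b, h' b⁆ = ∑ p ∈ P, ⁅h p.1, h' p.2⁆ := by
    have hall : ⁅∑ a, h a, ∑ b, h' b⁆ = ∑ p : ι × κ, ⁅h p.1, h' p.2⁆ := by
      simp only [Ring.lie_def, e1, e2, ← Finset.sum_sub_distrib]
    rw [hall, hPdef]
    refine (Finset.sum_filter_of_ne fun p _ hne => ?_).symm
    by_contra hc
    exact hne ((hcomm p.1 p.2 (Finset.not_nonempty_iff_eq_empty.mp hc)).lie_eq)
  -- Step 2: triangle inequality and the bound ‖⁅A,B⁆‖ ≤ 2‖A‖‖B‖.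
  have hnorm : ‖⁅∑ a, h a, ∑ b, h' b⁆‖ ≤ ∑ p ∈ P, 2 * ‖h p.1‖ * ‖h' p.2‖ := by
    rw [hsplit]
    refine (norm_sum_le _ _).trans (Finset.sum_le_sum fun p _ => ?_)
    calc ‖⁅h p.1, h' p.2⁆‖ ≤ ‖h p.1 * h' p.2‖ + ‖h' p.2 * h p.1‖ := by
          rw [Ring.lie_def]; exact norm_sub_le _ _
      _ ≤ ‖h p.1‖ * ‖h' p.2‖ + ‖h' p.2‖ * ‖h p.1‖ :=
          add_le_add (norm_mul_le _ _) (norm_mul_le _ _)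
      _ = 2 * ‖h p.1‖ * ‖h' p.2‖ := by ring
  -- Step 3: bound the sum over intersecting pairs by a sum over sites.
  have hnn : ∀ p : ι × κ, 0 ≤ 2 * ‖h p.1‖ * ‖h' p.2‖ := fun p => by positivity
  have hstep : ∑ p ∈ P, 2 * ‖h p.1‖ * ‖h' p.2‖ ≤
      ∑ i : Fin N, ∑ p ∈ Finset.univ.filter (fun p : ι × κ => i ∈ S_B p.1 ∧ i ∈ S_C p.2),
        2 * ‖h p.1‖ * ‖h' p.2‖ := by
    rw [hPdef]
    simp_rw [Finset.sum_filter]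
    rw [Finset.sum_comm]
    refine Finset.sum_le_sum fun p _ => ?_
    by_cases hp : (S_B p.1 ∩ S_C p.2).Nonempty
    · rw [if_pos hp]
      obtain ⟨i, hi⟩ := hp
      rw [Finset.mem_inter] at hi
      refine Finset.single_le_sum (f := fun i' : Fin N =>
        if i' ∈ S_B p.1 ∧ i' ∈ S_C p.2 then 2 * ‖h p.1‖ * ‖h' p.2‖ else 0)
        (fun i' _ => ?_) (Finset.mem_univ i) |>.trans_eq' ?_
      · split
        · exact hnn p
        · exact le_rfl
      · rw [if_pos ⟨hi.1, hi.2⟩]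
    · rw [if_neg hp]
      refine Finset.sum_nonneg fun i' _ => ?_
      split
      · exact hnn p
      · exact le_rfl
  -- Step 4: factor each site sum as a product and bound by g_B * g_C.
  have hsite : ∀ i : Fin N,
      ∑ p ∈ Finset.univ.filter (fun p : ι × κ => i ∈ S_B p.1 ∧ i ∈ S_C p.2),
        2 * ‖h p.1‖ * ‖h' p.2‖ ≤ 2 * g_B * g_C := by
    intro i
    have hfac : Finset.univ.filter (fun p : ι × κ => i ∈ S_B p.1 ∧ i ∈ S_C p.2) =
        (Finset.univ.filter (fun a => i ∈ S_B a)) ×ˢ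
        (Finset.univ.filter (fun b => i ∈ S_C b)) := by
      ext p
      simp [Finset.mem_product, and_assoc]
    rw [hfac, Finset.sum_product]
    have : ∑ a ∈ Finset.univ.filter (fun a => i ∈ S_B a),
        ∑ b ∈ Finset.univ.filter (fun b => i ∈ S_C b), 2 * ‖h a‖ * ‖h' b‖ =
        2 * ((∑ a ∈ Finset.univ.filter (fun a => i ∈ S_B a), ‖h a‖) *
          (∑ b ∈ Finset.univ.filter (fun b => i ∈ S_C b), ‖h' b‖)) := by
      rw [Finset.sum_mul_sum]
      rw [Finset.mul_sum]
      refine Finset.sum_congr rfl fun a _ => ?_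
      rw [Finset.mul_sum]
      refine Finset.sum_congr rfl fun b _ => ?_
      ring
    rw [this]
    have h1 : (∑ a ∈ Finset.univ.filter (fun a => i ∈ S_B a), ‖h a‖) *
        (∑ b ∈ Finset.univ.filter (fun b => i ∈ S_C b), ‖h' b‖) ≤ g_B * g_C :=
      mul_le_mul (hB i) (hC i) (Finset.sum_nonneg fun b _ => norm_nonneg _) hgB
    nlinarith
  calc ‖⁅∑ a, h a, ∑ b, h' b⁆‖ ≤ ∑ p ∈ P, 2 * ‖h p.1‖ * ‖h' p.2‖ := hnorm
    _ ≤ ∑ i : Fin N, ∑ p ∈ Finset.univ.filter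
          (fun p : ι × κ => i ∈ S_B p.1 ∧ i ∈ S_C p.2), 2 * ‖h p.1‖ * ‖h' p.2‖ := hstep
    _ ≤ ∑ _i : Fin N, 2 * g_B * g_C := Finset.sum_le_sum fun i _ => hsite i
    _ = 2 * N * g_B * g_C := by
        rw [Finset.sum_const, Finset.card_univ, Fintype.card_fin]; push_cast; ring
end

section
/- Let H be a Hermitian matrix in Matrix n n ℂ, let A be any matrix in Matrix n n ℂ, let λ ≥ 0 be real, and let (μ, u) and (ν, v) be eigenpairs of H, i.e. H.mulVec u = (μ:ℂ) • u and H.mulVec v = (ν:ℂ) • v with μ, ν : ℝ. Then |star u ⬝ᵥ (A.mulVec v)| ≤ Real.exp (-λ * (μ - ν)) * ‖Matrix.exp (λ • H) * A * Matrix.exp ((-λ) • H)‖ * ‖u‖ * ‖v‖. -/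
open scoped Matrix

section aux

attribute [local instance] Matrix.linftyOpNormedRing Matrix.linftyOpNormedAlgebra

/-- If `v` is an eigenvector of `M` with eigenvalue `c`, then it is an eigenvector of
`exp M` with eigenvalue `exp c`. -/
theorem exp_mulVec_eigen {n : Type*} [Fintype n] [DecidableEq n]
    (M : Matrix n n ℂ) (c : ℂ) (v : n → ℂ) (h : M.mulVec v = c • v) :
    (NormedSpace.exp M).mulVec v = NormedSpace.exp c • v := by
  have hpow : ∀ k : ℕ, (M ^ k).mulVec v = c ^ k • v := by
    intro k
    induction k with
    | zero => simp
    | succ k ih =>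
      rw [pow_succ, ← Matrix.mulVec_mulVec, h, Matrix.mulVec_smul, ih, smul_smul, pow_succ']
  let φ : Matrix n n ℂ →ₗ[ℂ] (n → ℂ) :=
    { toFun := fun N => N.mulVec v
      map_add' := fun N₁ N₂ => Matrix.add_mulVec _ _ _
      map_smul' := fun a N => Matrix.smul_mulVec a N v }
  have key : φ (NormedSpace.exp M) = NormedSpace.exp c • v := by
    rw [congrFun (NormedSpace.exp_eq_tsum (𝕂 := ℂ)) M]
    have hs : Summable fun k : ℕ => (k.factorial⁻¹ : ℂ) • M ^ k :=
      NormedSpace.expSeries_summable' (𝕂 := ℂ) M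
    show (LinearMap.toContinuousLinearMap φ) (∑' k : ℕ, (k.factorial⁻¹ : ℂ) • M ^ k)
      = NormedSpace.exp c • v
    rw [(LinearMap.toContinuousLinearMap φ).map_tsum hs]
    have : ∀ k : ℕ, (LinearMap.toContinuousLinearMap φ) ((k.factorial⁻¹ : ℂ) • M ^ k)
        = ((k.factorial⁻¹ : ℂ) * c ^ k) • v := by
      intro k
      simp only [LinearMap.coe_toContinuousLinearMap', map_smul]
      show (k.factorial⁻¹ : ℂ) • (M ^ k).mulVec v = _
      rw [hpow k, smul_smul]
    simp_rw [this]
    rw [Summable.tsum_smul_const, congrFun (NormedSpace.exp_eq_tsum (𝕂 := ℂ)) c]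
    · simp_rw [smul_eq_mul]
    · simpa [smul_eq_mul] using NormedSpace.expSeries_summable' (𝕂 := ℂ) c
  exact key

end aux

open scoped Matrix.Norms.L2Operator

/-- exponential tilt. For a Hermitian `H`, any matrix `A`,
`λ ≥ 0`, and eigenpairs `(μ, u)`, `(ν, v)` of `H`, the transition matrix element
satisfies `|⟨u, A v⟩| ≤ e^{-λ(μ-ν)} ‖e^{λH} A e^{-λH}‖ ‖u‖ ‖v‖`, where vector
norms are Euclidean (ℓ²) norms. -/
theorem transition_exponential_tilt
    {n : Type*} [Fintype n] [DecidableEq n] [Nonempty n]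
    (H A : Matrix n n ℂ) (hH : H.IsHermitian)
    (lam : ℝ) (hlam : 0 ≤ lam)
    (μ ν : ℝ) (u v : n → ℂ)
    (hu : H.mulVec u = (μ : ℂ) • u) (hv : H.mulVec v = (ν : ℂ) • v) :
    ‖star u ⬝ᵥ A.mulVec v‖
      ≤ Real.exp (-lam * (μ - ν))
          * ‖NormedSpace.exp (lam • H) * A * NormedSpace.exp ((-lam) • H)‖
          * ‖(WithLp.equiv 2 (n → ℂ)).symm u‖
          * ‖(WithLp.equiv 2 (n → ℂ)).symm v‖ := by
  set B := NormedSpace.exp (lam • H) * A * NormedSpace.exp ((-lam) • H) with hB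
  -- eigenvector facts
  have hu' : (lam • H).mulVec u = ((lam * μ : ℝ) : ℂ) • u := by
    rw [Matrix.smul_mulVec, hu, ← Complex.coe_smul, smul_smul]
    norm_num
  have hv' : ((-lam) • H).mulVec v = ((-lam * ν : ℝ) : ℂ) • v := by
    rw [Matrix.smul_mulVec, hv, ← Complex.coe_smul, smul_smul]
    norm_num
  have hEu : (NormedSpace.exp (lam • H)).mulVec u
      = NormedSpace.exp ((lam * μ : ℝ) : ℂ) • u := exp_mulVec_eigen _ _ _ hu'
  have hEv : (NormedSpace.exp ((-lam) • H)).mulVec v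
      = NormedSpace.exp ((-lam * ν : ℝ) : ℂ) • v := exp_mulVec_eigen _ _ _ hv'
  -- hermitian facts
  have hH' : (lam • H).IsHermitian := by
    unfold Matrix.IsHermitian
    rw [Matrix.conjTranspose_smul, hH.eq, star_trivial]
  have hEH : (NormedSpace.exp (lam • H)).IsHermitian := hH'.exp
  -- the tilting identity
  have key : star u ⬝ᵥ B.mulVec v
      = (Real.exp (lam * (μ - ν)) : ℂ) * (star u ⬝ᵥ A.mulVec v) := by
    have h1 : B.mulVec v = NormedSpace.exp ((-lam * ν : ℝ) : ℂ) •
        (NormedSpace.exp (lam • H)).mulVec (A.mulVec v) := by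
      rw [hB, ← Matrix.mulVec_mulVec, ← Matrix.mulVec_mulVec, hEv, Matrix.mulVec_smul,
        Matrix.mulVec_smul]
    rw [h1, dotProduct_smul]
    have h2 : star u ⬝ᵥ (NormedSpace.exp (lam • H)).mulVec (A.mulVec v)
        = NormedSpace.exp ((lam * μ : ℝ) : ℂ) * (star u ⬝ᵥ A.mulVec v) := by
      conv_lhs => rw [← hEH.eq]
      rw [Matrix.dotProduct_mulVec, ← Matrix.star_mulVec, hEu, star_smul,
        smul_dotProduct, smul_eq_mul]
      congr 1
      rw [← Complex.exp_eq_exp_ℂ, ← Complex.ofReal_exp, RCLike.star_def]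
      exact Complex.conj_ofReal _
    rw [h2, smul_eq_mul, ← mul_assoc, ← Complex.exp_eq_exp_ℂ, ← Complex.exp_add]
    rw [show Complex.exp (↑(-lam * ν) + ↑(lam * μ)) = (Real.exp (lam * (μ - ν)) : ℂ) by
      rw [← Complex.ofReal_add, Complex.ofReal_exp]; ring_nf]
  -- Cauchy–Schwarz / operator norm bound for B
  set U : EuclideanSpace ℂ n := (WithLp.equiv 2 (n → ℂ)).symm u
  set V : EuclideanSpace ℂ n := (WithLp.equiv 2 (n → ℂ)).symm v
  have hCS : ‖star u ⬝ᵥ B.mulVec v‖ ≤ ‖B‖ * ‖U‖ * ‖V‖ := by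
    have h1 : star u ⬝ᵥ B.mulVec v
        = inner (𝕜 := ℂ) U ((WithLp.equiv 2 (n → ℂ)).symm (B.mulVec v)) := (dotProduct_comm _ _).trans rfl
    rw [h1]
    calc ‖inner (𝕜 := ℂ) U ((WithLp.equiv 2 (n → ℂ)).symm (B.mulVec v))‖
        ≤ ‖U‖ * ‖(WithLp.equiv 2 (n → ℂ)).symm (B.mulVec v)‖ := norm_inner_le_norm _ _
      _ ≤ ‖U‖ * (‖B‖ * ‖V‖) := by
          gcongr
          exact B.l2_opNorm_mulVec V
      _ = ‖B‖ * ‖U‖ * ‖V‖ := by ring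
  -- combine
  have habs : ‖star u ⬝ᵥ B.mulVec v‖
      = Real.exp (lam * (μ - ν)) * ‖star u ⬝ᵥ A.mulVec v‖ := by
    rw [key, norm_mul, Complex.norm_real, Real.norm_eq_abs, abs_of_pos (Real.exp_pos _)]
  have hfinal : Real.exp (lam * (μ - ν)) * ‖star u ⬝ᵥ A.mulVec v‖
      ≤ ‖B‖ * ‖U‖ * ‖V‖ := habs ▸ hCS
  have hepos : (0:ℝ) < Real.exp (lam * (μ - ν)) := Real.exp_pos _
  calc ‖star u ⬝ᵥ A.mulVec v‖
      = Real.exp (-lam * (μ - ν)) *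
        (Real.exp (lam * (μ - ν)) * ‖star u ⬝ᵥ A.mulVec v‖) := by
        rw [← mul_assoc, ← Real.exp_add, neg_mul, neg_add_cancel, Real.exp_zero, one_mul]
    _ ≤ Real.exp (-lam * (μ - ν)) * (‖B‖ * ‖U‖ * ‖V‖) := by
        gcongr
    _ = Real.exp (-lam * (μ - ν)) * ‖B‖ * ‖U‖ * ‖V‖ := by ring
end

section
/- Let ι be a finite type, let h : ι → Matrix n n ℂ be a family of pairwise commuting matrices (Commute (h a) (h b) for all a, b), set H = ∑_a h a, and let A be a matrix such that Commute A (h a) for all a outside a subset T ⊆ ι. Let R = ∑_{a ∈ T} ‖h a‖. Then for every natural number l, the l-fold iterated commutator satisfies ‖ad_H^l(A)‖ ≤ (2 * R)^l * ‖A‖, where ad_H(X) := ⁅X, H⁆ = X*H - H*X. -/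
open scoped Matrix.Norms.L2Operator

/-- For a commuting family `h` with sum `H` and an operator `A`
commuting with all terms outside `T`, the `l`-fold iterated commutator
`ad_H^l(A)`, with `ad_H(X) = X*H - H*X`, is bounded in norm by `(2R)^l ‖A‖`
where `R = ∑_{a ∈ T} ‖h a‖`. -/
theorem iterated_commutator_bound
    {n : Type*} [Fintype n] [DecidableEq n] [Nonempty n]
    {ι : Type*} [Fintype ι]
    (h : ι → Matrix n n ℂ)
    (hcomm : ∀ a b, Commute (h a) (h b))
    (H : Matrix n n ℂ) (hH : H = ∑ a, h a)
    (A : Matrix n n ℂ) (T : Finset ι)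
    (hA : ∀ a ∉ T, Commute A (h a))
    (R : ℝ) (hR : R = ∑ a ∈ T, ‖h a‖)
    (l : ℕ) :
    ‖(fun X : Matrix n n ℂ => X * H - H * X)^[l] A‖ ≤ (2 * R) ^ l * ‖A‖ := by
  classical
  set f := fun X : Matrix n n ℂ => X * H - H * X with hf
  set HT : Matrix n n ℂ := ∑ a ∈ T, h a with hHT
  have hHTnorm : ‖HT‖ ≤ R := by
    rw [hR, hHT]; exact norm_sum_le _ _
  have hRnn : 0 ≤ R := by
    rw [hR]; exact Finset.sum_nonneg fun a _ => norm_nonneg _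
  -- main invariant
  have key : ∀ l : ℕ, (∀ a ∉ T, Commute (f^[l] A) (h a)) ∧
      ‖f^[l] A‖ ≤ (2 * R) ^ l * ‖A‖ := by
    intro l
    induction l with
    | zero => simpa using hA
    | succ l ih =>
      obtain ⟨hc, hn⟩ := ih
      set X := f^[l] A with hX
      have hstep : f^[l + 1] A = X * HT - HT * X := by
        rw [Function.iterate_succ_apply', ← hX, hf]
        have hsplit : H = HT + ∑ a ∈ Tᶜ, h a := by
          rw [hH, hHT, Finset.sum_add_sum_compl]
        have hXc : Commute X (∑ a ∈ Tᶜ, h a) :=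
          Commute.sum_right _ _ _ fun a ha =>
            hc a (Finset.mem_compl.mp ha)
        rw [hsplit]
        simp only [mul_add, add_mul]
        rw [hXc.eq]
        abel
      constructor
      · intro b hb
        rw [hstep]
        have h1 : Commute X (h b) := hc b hb
        have h2 : Commute HT (h b) :=
          Commute.sum_left _ _ _ fun a _ => hcomm a b
        exact (h1.mul_left h2).sub_left (h2.mul_left h1)
      · rw [hstep]
        calc ‖X * HT - HT * X‖ ≤ ‖X * HT‖ + ‖HT * X‖ := norm_sub_le _ _
          _ ≤ ‖X‖ * ‖HT‖ + ‖HT‖ * ‖X‖ :=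
              add_le_add (norm_mul_le _ _) (norm_mul_le _ _)
          _ = 2 * ‖HT‖ * ‖X‖ := by ring
          _ ≤ 2 * R * ((2 * R) ^ l * ‖A‖) := by
              apply mul_le_mul
              · linarith
              · exact hn
              · exact norm_nonneg _
              · linarith
          _ = (2 * R) ^ (l + 1) * ‖A‖ := by ring
  exact (key l).2
end

section
/- Let ι be a finite type, let h : ι → Matrix n n ℂ be a family of pairwise commuting matrices (Commute (h a) (h b) for all a, b), set H = ∑_a h a, and let A be a matrix such that Commute A (h a) for all a outside a subset T ⊆ ι. Let R = ∑_{a ∈ T} ‖h a‖. Then for every real λ, ‖Matrix.exp (λ • H) * A * Matrix.exp ((-λ) • H)‖ ≤ Real.exp (2 * |λ| * R) * ‖A‖. -/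
open scoped Matrix.Norms.L2Operator
open Nat

lemma my_norm_one {n : Type*} [Fintype n] [DecidableEq n] [Nonempty n] :
    ‖(1 : Matrix n n ℂ)‖ = 1 := CStarRing.norm_one

lemma my_norm_pow_le {n : Type*} [Fintype n] [DecidableEq n] [Nonempty n]
    (x : Matrix n n ℂ) (m : ℕ) : ‖x ^ m‖ ≤ ‖x‖ ^ m := by
  rcases Nat.eq_zero_or_pos m with rfl | hm
  · simp [my_norm_one]
  · exact norm_pow_le' x hm

lemma my_norm_exp_le {n : Type*} [Fintype n] [DecidableEq n] [Nonempty n]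
    (x : Matrix n n ℂ) : ‖NormedSpace.exp x‖ ≤ Real.exp ‖x‖ := by
  rw [NormedSpace.exp_eq_tsum ℂ, Real.exp_eq_exp_ℝ, NormedSpace.exp_eq_tsum ℝ]
  calc ‖(∑' (m : ℕ), ((m ! : ℂ)⁻¹ • x ^ m) : Matrix n n ℂ)‖
      ≤ ∑' (m : ℕ), ‖(m ! : ℂ)⁻¹ • x ^ m‖ :=
        norm_tsum_le_tsum_norm (NormedSpace.norm_expSeries_summable' x)
    _ ≤ ∑' (m : ℕ), ((m ! : ℝ)⁻¹ • ‖x‖ ^ m) := by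
        refine Summable.tsum_le_tsum (fun m => ?_) (NormedSpace.norm_expSeries_summable' x)
          (NormedSpace.expSeries_summable' (𝕂 := ℝ) ‖x‖)
        rw [norm_smul, norm_inv, Complex.norm_natCast, smul_eq_mul]
        exact mul_le_mul_of_nonneg_left (my_norm_pow_le x m) (by positivity)

/-- For a commuting family `h` with sum `H` and an operator `A`
commuting with all terms outside `T` (with `R = ∑_{a ∈ T} ‖h a‖`), the conjugation
by the matrix exponential satisfies `‖e^{λH} A e^{-λH}‖ ≤ e^{2|λ|R} ‖A‖`. -/
theorem exp_conj_norm_bound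
    {n : Type*} [Fintype n] [DecidableEq n] [Nonempty n]
    {ι : Type*} [Fintype ι]
    (h : ι → Matrix n n ℂ)
    (hcomm : ∀ a b, Commute (h a) (h b))
    (H : Matrix n n ℂ) (hH : H = ∑ a, h a)
    (A : Matrix n n ℂ) (T : Finset ι)
    (hA : ∀ a ∉ T, Commute A (h a))
    (R : ℝ) (hR : R = ∑ a ∈ T, ‖h a‖)
    (lam : ℝ) :
    ‖NormedSpace.exp (lam • H) * A * NormedSpace.exp ((-lam) • H)‖
      ≤ Real.exp (2 * |lam| * R) * ‖A‖ := by
  classical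
  set HT : Matrix n n ℂ := ∑ a ∈ T, h a with hHT
  set HO : Matrix n n ℂ := ∑ a ∈ Tᶜ, h a with hHO
  have hsplit : H = HT + HO := by
    rw [hH, hHT, hHO, Finset.sum_add_sum_compl]
  have hTO : Commute HT HO :=
    Commute.sum_right _ _ _ (fun b _ =>
      Commute.sum_left _ _ _ (fun a _ => hcomm a b))
  have hAO : Commute A HO :=
    Commute.sum_right _ _ _ (fun a ha => hA a (by simpa using ha))
  set eT := NormedSpace.exp (lam • HT) with heT
  set eT' := NormedSpace.exp ((-lam) • HT) with heT'
  set eO := NormedSpace.exp (lam • HO) with heO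
  set eO' := NormedSpace.exp ((-lam) • HO) with heO'
  have e1 : NormedSpace.exp (lam • H) = eT * eO := by
    rw [hsplit, smul_add]
    exact Matrix.exp_add_of_commute _ _ ((hTO.smul_left lam).smul_right lam)
  have e2 : NormedSpace.exp ((-lam) • H) = eO' * eT' := by
    rw [hsplit, smul_add, add_comm]
    exact Matrix.exp_add_of_commute _ _
      ((hTO.symm.smul_left (-lam)).smul_right (-lam))
  have h1 : eO * A = A * eO :=
    (((hAO.smul_right lam).exp_right).symm).eq
  have hcancel : eO * eO' = 1 := by
    rw [heO, heO', ← Matrix.exp_add_of_commute _ _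
      (((Commute.refl HO).smul_left lam).smul_right (-lam))]
    rw [neg_smul, add_neg_cancel, NormedSpace.exp_zero]
  have key : NormedSpace.exp (lam • H) * A * NormedSpace.exp ((-lam) • H)
      = eT * A * eT' := by
    rw [e1, e2]
    calc eT * eO * A * (eO' * eT')
        = eT * ((eO * A) * (eO' * eT')) := by simp only [mul_assoc]
      _ = eT * ((A * eO) * (eO' * eT')) := by rw [h1]
      _ = eT * (A * ((eO * eO') * eT')) := by simp only [mul_assoc]
      _ = eT * (A * eT') := by rw [hcancel, one_mul]
      _ = eT * A * eT' := by rw [mul_assoc]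
  have hHTnorm : ‖HT‖ ≤ R := hR ▸ norm_sum_le _ _
  have hb : ∀ μ : ℝ, ‖NormedSpace.exp (μ • HT)‖ ≤ Real.exp (|μ| * R) := by
    intro μ
    refine (my_norm_exp_le _).trans (Real.exp_le_exp.mpr ?_)
    rw [norm_smul, Real.norm_eq_abs]
    exact mul_le_mul_of_nonneg_left hHTnorm (abs_nonneg μ)
  rw [key]
  calc ‖eT * A * eT'‖ ≤ ‖eT‖ * ‖A‖ * ‖eT'‖ :=
        (norm_mul_le _ _).trans
          (mul_le_mul_of_nonneg_right (norm_mul_le _ _) (norm_nonneg _))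
    _ ≤ Real.exp (|lam| * R) * ‖A‖ * Real.exp (|-lam| * R) := by
        gcongr
        · exact hb lam
        · exact hb (-lam)
    _ = Real.exp (2 * |lam| * R) * ‖A‖ := by
        rw [abs_neg, mul_right_comm, ← Real.exp_add]
        ring_nf
end

section
/- (Spectral discretization.) Let C be a Hermitian matrix in Matrix n n ℂ and let ε > 0. Then there exists a Hermitian matrix C' such that: (i) Commute C C'; (ii) ‖C - C'‖ ≤ ε / 2; and (iii) every eigenvalue of C' is of the form m * ε + ε / 2 for some integer m. Moreover C' can be chosen so that every eigenvector of C is an eigenvector of C'. -/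
open scoped Matrix.Norms.L2Operator

open Matrix in
/-- The ℓ²→ℓ² operator norm of a diagonal matrix is bounded by a uniform bound
on the entries. -/
lemma l2_opNorm_diagonal_le {n : Type*} [Fintype n] [DecidableEq n]
    (d : n → ℂ) (c : ℝ) (hc : 0 ≤ c) (hd : ∀ i, ‖d i‖ ≤ c) :
    ‖Matrix.diagonal d‖ ≤ c := by
  rw [Matrix.l2_opNorm_def]
  refine ContinuousLinearMap.opNorm_le_bound _ hc fun x => ?_
  have hx : ∀ y : EuclideanSpace ℂ n, ‖y‖ = Real.sqrt (∑ i, ‖y i‖ ^ 2) := fun y =>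
    EuclideanSpace.norm_eq y
  have h1 : (((Matrix.toEuclideanLin.trans LinearMap.toContinuousLinearMap)
      (Matrix.diagonal d)) x : EuclideanSpace ℂ n) = Matrix.toEuclideanLin (Matrix.diagonal d) x :=
    rfl
  rw [h1, hx, hx]
  have h2 : ∀ i, (Matrix.toEuclideanLin (Matrix.diagonal d) x : EuclideanSpace ℂ n) i
      = d i * x i := by
    intro i
    show ((Matrix.diagonal d) *ᵥ (WithLp.equiv 2 (n → ℂ) x)) i = _
    simp [Matrix.mulVec_diagonal]
  calc Real.sqrt (∑ i, ‖(Matrix.toEuclideanLin (Matrix.diagonal d) x : EuclideanSpace ℂ n) i‖ ^ 2)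
      ≤ Real.sqrt (∑ i, c ^ 2 * ‖x i‖ ^ 2) := by
        apply Real.sqrt_le_sqrt
        apply Finset.sum_le_sum
        intro i _
        rw [h2 i, norm_mul, mul_pow]
        gcongr
        exact hd i
    _ = c * Real.sqrt (∑ i, ‖x i‖ ^ 2) := by
        rw [← Finset.mul_sum, Real.sqrt_mul (by positivity), Real.sqrt_sq hc]

open Matrix in
lemma l2_opNorm_unitary {n : Type*} [Fintype n] [DecidableEq n] [Nonempty n]
    (U : Matrix.unitaryGroup n ℂ) : ‖(U : Matrix n n ℂ)‖ = 1 := by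
  have h : ‖(U : Matrix n n ℂ)ᴴ * (U : Matrix n n ℂ)‖ = ‖(U : Matrix n n ℂ)‖ * ‖(U : Matrix n n ℂ)‖ :=
    Matrix.l2_opNorm_conjTranspose_mul_self _
  rw [← Matrix.star_eq_conjTranspose, Unitary.coe_star_mul_self] at h
  have h1 : ‖(1 : Matrix n n ℂ)‖ = 1 := by
    have h2 := Matrix.l2_opNorm_conjTranspose_mul_self (1 : Matrix n n ℂ)
    simp only [Matrix.conjTranspose_one, one_mul] at h2
    have h3 : 0 < ‖(1 : Matrix n n ℂ)‖ :=
      norm_pos_iff.2 (one_ne_zero (α := Matrix n n ℂ))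
    nlinarith
  rw [h1] at h
  nlinarith [norm_nonneg (U : Matrix n n ℂ)]

/-- spectral discretization. Given a Hermitian matrix `C` and
`ε > 0`, there is a Hermitian matrix `C'` commuting with `C`, with
`‖C - C'‖ ≤ ε / 2`, whose every eigenvalue is of the form `m ε + ε/2` for an
integer `m`, and such that every eigenvector of `C` is an eigenvector of `C'`. -/
theorem spectral_discretization
    {n : Type*} [Fintype n] [DecidableEq n] [Nonempty n]
    (C : Matrix n n ℂ) (hC : C.IsHermitian) (ε : ℝ) (hε : 0 < ε) :
    ∃ C' : Matrix n n ℂ,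
      C'.IsHermitian ∧
      Commute C C' ∧
      ‖C - C'‖ ≤ ε / 2 ∧
      (∀ (μ : ℝ) (v : n → ℂ), v ≠ 0 → C'.mulVec v = (μ : ℂ) • v →
        ∃ m : ℤ, μ = m * ε + ε / 2) ∧
      (∀ (μ : ℂ) (v : n → ℂ), C.mulVec v = μ • v →
        ∃ μ' : ℂ, C'.mulVec v = μ' • v) := by
  classical
  set f : ℝ → ℝ := fun x => ⌊x / ε⌋ * ε + ε / 2 with hf
  have hfd : ∀ x : ℝ, |x - f x| ≤ ε / 2 := by
    intro x
    have h1 : ⌊x / ε⌋ * ε ≤ x := by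
      rw [← le_div_iff₀ hε]
      exact Int.floor_le _
    have h2 : x < ⌊x / ε⌋ * ε + ε := by
      have := Int.lt_floor_add_one (x / ε)
      calc x = (x / ε) * ε := by field_simp
        _ < (⌊x / ε⌋ + 1) * ε := by gcongr
        _ = ⌊x / ε⌋ * ε + ε := by ring
    rw [abs_le]
    constructor <;> simp only [hf] <;> linarith
  set U : Matrix n n ℂ := (hC.eigenvectorUnitary : Matrix n n ℂ) with hU
  have hU1 : star U * U = 1 := Unitary.coe_star_mul_self hC.eigenvectorUnitary
  have hU2 : U * star U = 1 := Unitary.coe_mul_star_self hC.eigenvectorUnitary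
  have hnu : ‖U‖ = 1 := l2_opNorm_unitary hC.eigenvectorUnitary
  have hspec0 : C = U * Matrix.diagonal (RCLike.ofReal ∘ hC.eigenvalues) * star U :=
    hC.spectral_theorem
  clear_value U
  clear hU
  set D : Matrix n n ℂ := Matrix.diagonal (RCLike.ofReal ∘ hC.eigenvalues) with hD
  set D' : Matrix n n ℂ :=
    Matrix.diagonal (fun i => ((f (hC.eigenvalues i) : ℝ) : ℂ)) with hD'
  have hspec : C = U * D * star U := hspec0
  refine ⟨U * D' * star U, ?_, ?_, ?_, ?_, ?_⟩
  · -- Hermitian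
    have hD'h : D'.IsHermitian := by
      refine Matrix.isHermitian_diagonal_of_self_adjoint _ ?_
      funext i
      simp [Pi.star_def, Complex.conj_ofReal]
    rw [Matrix.star_eq_conjTranspose]
    exact Matrix.isHermitian_mul_mul_conjTranspose U hD'h
  · -- Commute
    show C * (U * D' * star U) = (U * D' * star U) * C
    rw [hspec]
    have hDD' : D * D' = D' * D := by
      rw [hD, hD', Matrix.diagonal_mul_diagonal, Matrix.diagonal_mul_diagonal]
      exact congrArg Matrix.diagonal (funext fun i => mul_comm _ _)
    calc U * D * star U * (U * D' * star U)
        = U * (D * (star U * U) * D') * star U := by noncomm_ring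
      _ = U * (D * D') * star U := by rw [hU1]; noncomm_ring
      _ = U * (D' * D) * star U := by rw [hDD']
      _ = U * (D' * (star U * U) * D) * star U := by rw [hU1]; noncomm_ring
      _ = U * D' * star U * (U * D * star U) := by noncomm_ring
  · -- norm bound
    have hdiff : C - (U * D' * star U) = U * (D - D') * star U := by
      rw [hspec]; noncomm_ring
    rw [hdiff]
    have hDD' : D - D' = Matrix.diagonal
        (fun i => ((hC.eigenvalues i - f (hC.eigenvalues i) : ℝ) : ℂ)) := by
      rw [hD, hD', Matrix.diagonal_sub]
      funext i
      push_cast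
      simp [Function.comp]
    have hnd : ‖D - D'‖ ≤ ε / 2 := by
      rw [hDD']
      refine l2_opNorm_diagonal_le _ _ (by linarith) fun i => ?_
      rw [Complex.norm_real, Real.norm_eq_abs]
      exact hfd _
    have hnus : ‖star U‖ = 1 := by
      rw [Matrix.star_eq_conjTranspose, Matrix.l2_opNorm_conjTranspose]; exact hnu
    calc ‖U * (D - D') * star U‖ ≤ ‖U * (D - D')‖ * ‖star U‖ := Matrix.l2_opNorm_mul _ _
      _ ≤ ‖U‖ * ‖D - D'‖ * ‖star U‖ := by
          gcongr; exact Matrix.l2_opNorm_mul _ _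
      _ = ‖D - D'‖ := by rw [hnu, hnus]; ring
      _ ≤ ε / 2 := hnd
  · -- eigenvalues of C'
    intro μ v hv hμv
    have hw : D'.mulVec (Matrix.mulVec (star U) v) = (μ : ℂ) • (Matrix.mulVec (star U) v) := by
      have := congrArg (Matrix.mulVec (star U)) hμv
      rw [Matrix.mulVec_smul] at this
      rw [Matrix.mulVec_mulVec, ← mul_assoc, ← mul_assoc, hU1, one_mul,
        ← Matrix.mulVec_mulVec] at this
      exact this
    have hwne : Matrix.mulVec (star U) v ≠ 0 := by
      intro h0
      apply hv
      have := congrArg (Matrix.mulVec U) h0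
      rwa [Matrix.mulVec_mulVec, hU2, Matrix.one_mulVec, Matrix.mulVec_zero] at this
    obtain ⟨i, hi⟩ := Function.ne_iff.mp hwne
    have heq : ((f (hC.eigenvalues i) : ℝ) : ℂ) * (Matrix.mulVec (star U) v i)
        = (μ : ℂ) * (Matrix.mulVec (star U) v i) := by
      have := congrFun hw i
      simpa [hD', Matrix.mulVec_diagonal] using this
    have hcast : ((f (hC.eigenvalues i) : ℝ) : ℂ) = (μ : ℂ) := mul_right_cancel₀ hi heq
    have hμ : μ = f (hC.eigenvalues i) := by exact_mod_cast hcast.symm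
    exact ⟨⌊hC.eigenvalues i / ε⌋, by rw [hμ]⟩
  · -- eigenvectors transfer
    intro μ v hμv
    refine ⟨((f μ.re : ℝ) : ℂ), ?_⟩
    set w : n → ℂ := Matrix.mulVec (star U) v with hwdef
    have hDw : D.mulVec w = μ • w := by
      have h1 : C.mulVec v = U.mulVec (D.mulVec w) := by
        rw [hspec, ← Matrix.mulVec_mulVec, ← Matrix.mulVec_mulVec]
      have := congrArg (Matrix.mulVec (star U)) (h1.symm.trans hμv)
      rw [Matrix.mulVec_mulVec, hU1, Matrix.one_mulVec, Matrix.mulVec_smul] at this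
      exact this
    have hD'w : D'.mulVec w = ((f μ.re : ℝ) : ℂ) • w := by
      funext i
      have h1 : ((hC.eigenvalues i : ℝ) : ℂ) * w i = μ * w i := by
        have := congrFun hDw i
        simpa [hD, Matrix.mulVec_diagonal, Function.comp, RCLike.ofReal] using this
      show D'.mulVec w i = ((f μ.re : ℝ) : ℂ) * w i
      rw [hD']
      simp only [Matrix.mulVec_diagonal]
      by_cases hwi : w i = 0
      · rw [hwi, mul_zero, mul_zero]
      · have hlam : ((hC.eigenvalues i : ℝ) : ℂ) = μ := mul_right_cancel₀ hwi h1
        have hre : μ.re = hC.eigenvalues i := by rw [← hlam]; simp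
        rw [hre]
    calc (U * D' * star U).mulVec v = U.mulVec (D'.mulVec w) := by
          rw [← Matrix.mulVec_mulVec, ← Matrix.mulVec_mulVec]
      _ = U.mulVec (((f μ.re : ℝ) : ℂ) • w) := by rw [hD'w]
      _ = ((f μ.re : ℝ) : ℂ) • U.mulVec w := by rw [Matrix.mulVec_smul]
      _ = ((f μ.re : ℝ) : ℂ) • v := by
          rw [hwdef, Matrix.mulVec_mulVec, hU2, Matrix.one_mulVec]
end

section
/- Let C be a Hermitian matrix in Matrix n n ℂ, let H be any matrix in Matrix n n ℂ, and let Δ ≥ 0. Suppose that for all eigenpairs (μ, u) and (ν, v) of C with real eigenvalues satisfying |μ - ν| > Δ, one has star u ⬝ᵥ (H.mulVec v) = 0. Then ‖⁅C, H⁆‖ ≤ 3 * Δ * ‖H‖. -/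
open scoped Matrix.Norms.L2Operator
open scoped Matrix

section Aux
open Matrix

variable {n : Type*} [Fintype n] [DecidableEq n] [Nonempty n]

set_option linter.unusedSectionVars false

private lemma opNorm_le_of_sq (A : Matrix n n ℂ) {c : ℝ} (hc : 0 ≤ c)
    (h : ∀ x : n → ℂ, ∑ i, ‖(A *ᵥ x) i‖^2 ≤ c^2 * ∑ i, ‖x i‖^2) : ‖A‖ ≤ c := by
  rw [Matrix.l2_opNorm_def]
  apply ContinuousLinearMap.opNorm_le_bound _ hc
  intro x
  have h1 : ‖(Matrix.toEuclideanLin.trans LinearMap.toContinuousLinearMap A) x‖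
      = Real.sqrt (∑ i, ‖(A *ᵥ (fun i => x i)) i‖^2) := by
    rw [EuclideanSpace.norm_eq]
    congr 1
  have h2 : ‖x‖ = Real.sqrt (∑ i, ‖x i‖^2) := by
    rw [EuclideanSpace.norm_eq]
  rw [h1, h2]
  calc Real.sqrt (∑ i, ‖(A *ᵥ (fun i => x i)) i‖^2) ≤ Real.sqrt (c^2 * ∑ i, ‖x i‖^2) :=
        Real.sqrt_le_sqrt (h _)
    _ = c * Real.sqrt (∑ i, ‖x i‖^2) := by
        rw [Real.sqrt_mul (sq_nonneg c), Real.sqrt_sq hc]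

lemma sq_sum_mulVec_le (A : Matrix n n ℂ) (x : n → ℂ) :
    ∑ i, ‖(A *ᵥ x) i‖^2 ≤ ‖A‖^2 * ∑ i, ‖x i‖^2 := by
  have := Matrix.l2_opNorm_mulVec A ((EuclideanSpace.equiv n ℂ).symm x)
  have h1 : ‖(EuclideanSpace.equiv n ℂ).symm (A *ᵥ (EuclideanSpace.equiv n ℂ).symm x)‖
      = Real.sqrt (∑ i, ‖(A *ᵥ x) i‖^2) := by rw [EuclideanSpace.norm_eq]; rfl
  have h2 : ‖(EuclideanSpace.equiv n ℂ).symm x‖ = Real.sqrt (∑ i, ‖x i‖^2) := by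
    rw [EuclideanSpace.norm_eq]; rfl
  rw [h1, h2] at this
  have hs : Real.sqrt (∑ i, ‖(A *ᵥ x) i‖^2) ≤ Real.sqrt (‖A‖^2 * ∑ i, ‖x i‖^2) := by
    refine this.trans (le_of_eq ?_)
    rw [Real.sqrt_mul (sq_nonneg _), Real.sqrt_sq (norm_nonneg A)]
  exact (Real.sqrt_le_sqrt_iff (by positivity)).mp hs

private lemma masked_norm_le (A : Matrix n n ℂ) (N : n → ℤ) (m : ℤ) :
    ‖(Matrix.of fun i j => if N i = N j + m then A i j else 0 : Matrix n n ℂ)‖ ≤ ‖A‖ := by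
  apply opNorm_le_of_sq _ (norm_nonneg A)
  intro x
  set xk : ℤ → (n → ℂ) := fun k j => if N j = k then x j else 0 with hxk
  have key : ∀ i, ((Matrix.of fun i j => if N i = N j + m then A i j else 0 : Matrix n n ℂ) *ᵥ x) i
      = (A *ᵥ xk (N i - m)) i := by
    intro i
    simp only [Matrix.mulVec, dotProduct, Matrix.of_apply, hxk]
    apply Finset.sum_congr rfl
    intro j _
    rcases eq_or_ne (N i) (N j + m) with h | h
    · rw [if_pos h, if_pos (by omega), mul_comm]  -- careful
    · rw [if_neg h, if_neg (by omega), zero_mul, mul_zero]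
  calc ∑ i, ‖((Matrix.of fun i j => if N i = N j + m then A i j else 0 : Matrix n n ℂ) *ᵥ x) i‖^2
      = ∑ i, ‖(A *ᵥ xk (N i - m)) i‖^2 := by simp_rw [key]
    _ = ∑ k ∈ Finset.image (fun i => N i - m) Finset.univ,
          ∑ i ∈ Finset.univ.filter (fun i => N i - m = k), ‖(A *ᵥ xk (N i - m)) i‖^2 := by
        rw [Finset.sum_fiberwise_of_maps_to]
        intro i _; exact Finset.mem_image_of_mem _ (Finset.mem_univ i)
    _ = ∑ k ∈ Finset.image (fun i => N i - m) Finset.univ,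
          ∑ i ∈ Finset.univ.filter (fun i => N i - m = k), ‖(A *ᵥ xk k) i‖^2 := by
        refine Finset.sum_congr rfl fun k _ => Finset.sum_congr rfl fun i hi => ?_
        rw [Finset.mem_filter] at hi; rw [hi.2]
    _ ≤ ∑ k ∈ Finset.image (fun i => N i - m) Finset.univ, ∑ i, ‖(A *ᵥ xk k) i‖^2 := by
        refine Finset.sum_le_sum fun k _ => Finset.sum_le_sum_of_subset_of_nonneg
          (Finset.filter_subset _ _) fun i _ _ => by positivity
    _ ≤ ∑ k ∈ Finset.image (fun i => N i - m) Finset.univ, ‖A‖^2 * ∑ j, ‖xk k j‖^2 := by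
        exact Finset.sum_le_sum fun k _ => sq_sum_mulVec_le A (xk k)
    _ = ‖A‖^2 * ∑ k ∈ Finset.image (fun i => N i - m) Finset.univ, ∑ j, ‖xk k j‖^2 := by
        rw [Finset.mul_sum]
    _ ≤ ‖A‖^2 * ∑ j, ‖x j‖^2 := by
        apply mul_le_mul_of_nonneg_left _ (sq_nonneg _)
        rw [Finset.sum_comm]
        apply Finset.sum_le_sum
        intro j _
        have : ∀ k, ‖xk k j‖^2 = if N j = k then ‖x j‖^2 else 0 := by
          intro k; simp only [hxk]; split <;> simp
        simp_rw [this]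
        rw [Finset.sum_ite_eq]
        split <;> simp [sq_nonneg]

private lemma diag_norm_le (v : n → ℂ) {c : ℝ} (hc : 0 ≤ c) (h : ∀ i, ‖v i‖ ≤ c) :
    ‖(Matrix.diagonal v : Matrix n n ℂ)‖ ≤ c := by
  apply opNorm_le_of_sq _ hc
  intro x
  rw [Finset.mul_sum]
  apply Finset.sum_le_sum
  intro i _
  rw [Matrix.mulVec_diagonal, norm_mul, mul_pow]
  have h2 : ‖v i‖^2 ≤ c^2 := by nlinarith [h i, norm_nonneg (v i)]
  exact mul_le_mul_of_nonneg_right h2 (sq_nonneg _)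

private lemma floor_band {Δ : ℝ} (hΔ : 0 < Δ) {a b : ℝ} (h : |a - b| ≤ Δ) :
    |⌊a / Δ⌋ - ⌊b / Δ⌋| ≤ 1 := by
  rw [abs_le] at h ⊢
  have hab : a / Δ ≤ b / Δ + 1 := by
    rw [div_add' _ _ _ hΔ.ne']
    gcongr
    linarith
  have hba : b / Δ ≤ a / Δ + 1 := by
    rw [div_add' _ _ _ hΔ.ne']
    gcongr
    linarith
  constructor
  · have := Int.floor_le_floor hba  -- ⌊b/Δ⌋ ≤ ⌊a/Δ + 1⌋
    rw [Int.floor_add_one] at this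
    omega
  · have := Int.floor_le_floor hab
    rw [Int.floor_add_one] at this
    omega

private lemma diag_comm_bound (d : n → ℝ) (A : Matrix n n ℂ) {Δ : ℝ} (hΔ : 0 ≤ Δ)
    (hA : ∀ i j, Δ < |d i - d j| → A i j = 0) :
    ‖Matrix.diagonal (fun i => (d i : ℂ)) * A - A * Matrix.diagonal (fun i => (d i : ℂ))‖
      ≤ 3 * Δ * ‖A‖ := by
  rcases hΔ.eq_or_lt with h0 | hΔ'
  · -- Δ = 0 : commutator vanishes
    have : Matrix.diagonal (fun i => (d i : ℂ)) * A - A * Matrix.diagonal (fun i => (d i : ℂ)) = 0 := by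
      ext i j
      simp only [Matrix.sub_apply, Matrix.diagonal_mul, Matrix.mul_diagonal, Matrix.zero_apply]
      rcases eq_or_ne (d i) (d j) with h | h
      · rw [h]; ring
      · rw [hA i j (by rw [← h0]; exact abs_pos.mpr (sub_ne_zero.mpr h))]; ring
    rw [this, norm_zero]
    positivity
  · set N : n → ℤ := fun i => ⌊d i / Δ⌋ with hN
    set r : n → ℝ := fun i => d i - Δ * N i - Δ/2 with hr
    have hrb : ∀ i, |r i| ≤ Δ/2 := by
      intro i
      have h1 : (0:ℝ) ≤ Int.fract (d i / Δ) := Int.fract_nonneg _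
      have h2 : Int.fract (d i / Δ) < 1 := Int.fract_lt_one _
      have h3 : d i - Δ * N i = Δ * Int.fract (d i / Δ) := by
        rw [hN, Int.fract]
        push_cast
        rw [div_eq_mul_inv, mul_sub, ← mul_assoc, mul_comm Δ (d i), mul_assoc,
          mul_inv_cancel₀ (ne_of_gt hΔ'), mul_one]
      rw [abs_le, hr]
      constructor <;> nlinarith
    set Ap := (Matrix.of fun i j => if N i = N j + 1 then A i j else 0 : Matrix n n ℂ) with hAp
    set Am := (Matrix.of fun i j => if N i = N j + (-1) then A i j else 0 : Matrix n n ℂ) with hAm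
    set R := (Matrix.diagonal (fun i => (r i : ℂ)) : Matrix n n ℂ) with hR
    have decomp : Matrix.diagonal (fun i => (d i : ℂ)) * A - A * Matrix.diagonal (fun i => (d i : ℂ))
        = (Δ:ℂ) • (Ap - Am) + (R * A - A * R) := by
      ext i j
      simp only [Matrix.sub_apply, Matrix.add_apply, Matrix.smul_apply, Matrix.diagonal_mul,
        Matrix.mul_diagonal, Matrix.of_apply, hAp, hAm, hR, smul_eq_mul]
      have hd : ∀ k, (d k : ℂ) = Δ * N k + Δ/2 + r k := by
        intro k; rw [hr]; push_cast; ring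
      rw [hd i, hd j]
      rcases eq_or_ne (A i j) 0 with hz | hz
      · simp [hz]
      · have hle : |d i - d j| ≤ Δ := by
          by_contra hc
          exact hz (hA i j (lt_of_not_ge hc))
        have hNN : |N i - N j| ≤ 1 := floor_band hΔ' hle
        have : N i - N j = -1 ∨ N i - N j = 0 ∨ N i - N j = 1 := by
          rcases abs_le.mp hNN with ⟨ha, hb⟩; omega
        rcases this with h | h | h
        · rw [if_neg (by omega), if_pos (by omega)]
          have : (N i : ℂ) = (N j : ℂ) - 1 := by
            have : (N i : ℤ) = N j - 1 := by omega
            exact_mod_cast congrArg (Int.cast : ℤ → ℂ) this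
          rw [this]; ring
        · rw [if_neg (by omega), if_neg (by omega)]
          have : (N i : ℂ) = (N j : ℂ) := by exact_mod_cast congrArg (Int.cast : ℤ → ℂ) (by omega : (N i : ℤ) = N j)
          rw [this]; ring
        · rw [if_pos (by omega), if_neg (by omega)]
          have : (N i : ℂ) = (N j : ℂ) + 1 := by
            exact_mod_cast congrArg (Int.cast : ℤ → ℂ) (by omega : (N i : ℤ) = N j + 1)
          rw [this]; ring
    rw [decomp]
    have hRn : ‖R‖ ≤ Δ/2 := by
      apply diag_norm_le _ (by linarith)
      intro i
      rw [Complex.norm_real, Real.norm_eq_abs]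
      exact hrb i
    have hApn : ‖Ap‖ ≤ ‖A‖ := masked_norm_le A N 1
    have hAmn : ‖Am‖ ≤ ‖A‖ := masked_norm_le A N (-1)
    calc ‖(Δ:ℂ) • (Ap - Am) + (R * A - A * R)‖
        ≤ ‖(Δ:ℂ) • (Ap - Am)‖ + ‖R * A - A * R‖ := norm_add_le _ _
      _ ≤ Δ * (‖Ap‖ + ‖Am‖) + (‖R‖ * ‖A‖ + ‖A‖ * ‖R‖) := by
          apply add_le_add
          · rw [norm_smul, Complex.norm_real, Real.norm_eq_abs, abs_of_nonneg hΔ]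
            exact mul_le_mul_of_nonneg_left (norm_sub_le _ _) hΔ
          · exact (norm_sub_le _ _).trans (add_le_add (Matrix.l2_opNorm_mul R A) (Matrix.l2_opNorm_mul A R))
      _ ≤ Δ * (‖A‖ + ‖A‖) + ((Δ/2) * ‖A‖ + ‖A‖ * (Δ/2)) := by
          apply add_le_add
          · exact mul_le_mul_of_nonneg_left (add_le_add hApn hAmn) hΔ
          · exact add_le_add (mul_le_mul_of_nonneg_right hRn (norm_nonneg A))
              (mul_le_mul_of_nonneg_left hRn (norm_nonneg A))
      _ = 3 * Δ * ‖A‖ := by ring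

private lemma matrix_norm_one : ‖(1 : Matrix n n ℂ)‖ = 1 := by
  rw [Matrix.cstar_norm_def, _root_.map_one]
  exact norm_one

lemma unitary_norm_one (U : Matrix.unitaryGroup n ℂ) : ‖(U : Matrix n n ℂ)‖ = 1 := by
  have h : ‖(U : Matrix n n ℂ)‖ * ‖(U : Matrix n n ℂ)‖ = 1 := by
    rw [← Matrix.l2_opNorm_conjTranspose_mul_self, ← Matrix.star_eq_conjTranspose,
      Unitary.coe_star_mul_self, matrix_norm_one]
  have := norm_nonneg (U : Matrix n n ℂ)
  nlinarith


end Aux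

/-- If, in the eigenbasis of a Hermitian matrix `C`, the operator
`H` only connects eigenspaces whose (real) eigenvalues differ by at most `Δ`,
then `‖⁅C, H⁆‖ ≤ 3 Δ ‖H‖`. -/
theorem commutator_bound_of_banded_transitions
    {n : Type*} [Fintype n] [DecidableEq n] [Nonempty n]
    (C H : Matrix n n ℂ) (hC : C.IsHermitian)
    (Δ : ℝ) (hΔ : 0 ≤ Δ)
    (hband : ∀ (μ ν : ℝ) (u v : n → ℂ),
      C.mulVec u = (μ : ℂ) • u → C.mulVec v = (ν : ℂ) • v →
      |μ - ν| > Δ → star u ⬝ᵥ H.mulVec v = 0) :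
    ‖⁅C, H⁆‖ ≤ 3 * Δ * ‖H‖ := by
  set U : Matrix n n ℂ := (hC.eigenvectorUnitary : Matrix n n ℂ) with hU
  set d : n → ℝ := hC.eigenvalues with hd
  set A : Matrix n n ℂ := star U * H * U with hA
  -- eigen equation in ℂ-smul form
  have heig : ∀ i, C.mulVec (⇑(hC.eigenvectorBasis i)) = ((d i : ℂ)) • ⇑(hC.eigenvectorBasis i) := by
    intro i
    rw [hC.mulVec_eigenvectorBasis]
    exact RCLike.real_smul_eq_coe_smul (K := ℂ) _ _
  -- entries of A
  have hAentry : ∀ i j, A i j = star (⇑(hC.eigenvectorBasis i)) ⬝ᵥ H.mulVec (⇑(hC.eigenvectorBasis j)) := by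
    intro i j
    simp only [hA, Matrix.mul_apply, Matrix.star_apply, dotProduct, Matrix.mulVec,
      Pi.star_apply, hC.eigenvectorUnitary_apply, hU]
    simp_rw [Finset.sum_mul, Finset.mul_sum]
    rw [Finset.sum_comm]
    apply Finset.sum_congr rfl
    intro a _
    apply Finset.sum_congr rfl
    intro b _
    ring
  have hAzero : ∀ i j, Δ < |d i - d j| → A i j = 0 := by
    intro i j h
    rw [hAentry i j]
    exact hband (d i) (d j) _ _ (heig i) (heig j) h
  -- conjugation identity
  have hUU : U * star U = 1 := by
    rw [hU]; exact (Matrix.mem_unitaryGroup_iff).mp hC.eigenvectorUnitary.2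
  have hUU' : star U * U = 1 := by
    rw [hU]; exact Unitary.coe_star_mul_self hC.eigenvectorUnitary
  set D : Matrix n n ℂ := Matrix.diagonal (fun i => (d i : ℂ)) with hD
  have hspec : C = U * D * star U := by
    have := hC.spectral_theorem
    rw [Unitary.conjStarAlgAut_apply] at this
    rw [hU, hD]
    exact this
  have hH : U * A * star U = H := by
    rw [hA]
    calc U * (star U * H * U) * star U = (U * star U) * H * (U * star U) := by noncomm_ring
      _ = H := by rw [hUU, one_mul, mul_one]
  have hcomm : ⁅C, H⁆ = U * (D * A - A * D) * star U := by
    rw [Ring.lie_def, hspec, ← hH]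
    have e1 : (U*D*star U) * (U*A*star U) = U*(D*A)*star U := by
      calc (U*D*star U) * (U*A*star U) = U*(D*((star U*U)*(A*star U))) := by noncomm_ring
        _ = U*(D*A)*star U := by rw [hUU', one_mul]; noncomm_ring
    have e2 : (U*A*star U) * (U*D*star U) = U*(A*D)*star U := by
      calc (U*A*star U) * (U*D*star U) = U*(A*((star U*U)*(D*star U))) := by noncomm_ring
        _ = U*(A*D)*star U := by rw [hUU', one_mul]; noncomm_ring
    rw [e1, e2]
    noncomm_ring
  have hUn : ‖U‖ = 1 := unitary_norm_one hC.eigenvectorUnitary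
  have hsUn : ‖star U‖ = 1 := by
    rw [Matrix.star_eq_conjTranspose, Matrix.l2_opNorm_conjTranspose, hUn]
  have hconj : ∀ M : Matrix n n ℂ, ‖U * M * star U‖ ≤ ‖M‖ := by
    intro M
    calc ‖U * M * star U‖ ≤ ‖U * M‖ * ‖star U‖ := Matrix.l2_opNorm_mul _ _
      _ ≤ (‖U‖ * ‖M‖) * ‖star U‖ :=
          mul_le_mul_of_nonneg_right (Matrix.l2_opNorm_mul _ _) (norm_nonneg _)
      _ = ‖M‖ := by rw [hUn, hsUn]; ring
  have hAle : ‖A‖ ≤ ‖H‖ := by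
    rw [hA]
    calc ‖star U * H * U‖ ≤ ‖star U * H‖ * ‖U‖ := Matrix.l2_opNorm_mul _ _
      _ ≤ (‖star U‖ * ‖H‖) * ‖U‖ :=
          mul_le_mul_of_nonneg_right (Matrix.l2_opNorm_mul _ _) (norm_nonneg _)
      _ = ‖H‖ := by rw [hUn, hsUn]; ring
  calc ‖⁅C, H⁆‖ = ‖U * (D * A - A * D) * star U‖ := by rw [hcomm]
    _ ≤ ‖D * A - A * D‖ := hconj _
    _ ≤ 3 * Δ * ‖A‖ := diag_comm_bound d A hΔ hAzero
    _ ≤ 3 * Δ * ‖H‖ := mul_le_mul_of_nonneg_left hAle (by linarith)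
end

section
/- Fix N ≥ 1 and let H_CS = ∑_{i=1}^N σx^{(0)} * σx^{(i)} and H_CS' = ∑_{j=1}^N σy^{(0)} * σx^{(j)} be the two central-spin interaction operators on N+1 qubits. Then ⁅H_CS, H_CS'⁆ = (2 * Complex.I) • (σz^{(0)} * (∑_{i=1}^N σx^{(i)})^2). -/
open scoped Matrix.Norms.L2Operator
open scoped Matrix

/-- The 2×2 matrix `P` acting on site `j` of a chain of `N+1` qubits
(identity elsewhere): `P⁽ʲ⁾ f g = P (f j) (g j) * ∏_{k ≠ j} δ_{f k, g k}`. -/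
def siteOp {N : ℕ} (P : Matrix (Fin 2) (Fin 2) ℂ) (j : Fin (N + 1)) :
    Matrix (Fin (N + 1) → Fin 2) (Fin (N + 1) → Fin 2) ℂ :=
  fun f g => P (f j) (g j) * ∏ k ∈ Finset.univ.erase j, (if f k = g k then (1 : ℂ) else 0)

/-- Pauli X. -/
def σx : Matrix (Fin 2) (Fin 2) ℂ := !![0, 1; 1, 0]
/-- Pauli Y. -/
def σy : Matrix (Fin 2) (Fin 2) ℂ := !![0, -Complex.I; Complex.I, 0]
/-- Pauli Z. -/
def σz : Matrix (Fin 2) (Fin 2) ℂ := !![1, 0; 0, -1]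

/-- The peripheral site labelled `i+1` (site `0` is the central spin). -/
def per {N : ℕ} (i : Fin N) : Fin (N + 1) := i.succ

lemma siteOp_apply' {N : ℕ} (P : Matrix (Fin 2) (Fin 2) ℂ) (j : Fin (N + 1)) (f g) :
    siteOp P j f g = P (f j) (g j) * (if ∀ k, k ≠ j → f k = g k then 1 else 0) := by
  unfold siteOp
  rw [Finset.prod_boole]
  congr 1
  simp [Finset.mem_erase]

lemma sum_update {N : ℕ} (T : (Fin (N + 1) → Fin 2) → ℂ) (f : Fin (N + 1) → Fin 2)
    (j : Fin (N + 1)) (hT : ∀ h, ¬ (∀ m, m ≠ j → h m = f m) → T h = 0) :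
    ∑ h, T h = ∑ b : Fin 2, T (Function.update f j b) := by
  classical
  have hinj : ∀ b₁ ∈ Finset.univ, ∀ b₂ ∈ (Finset.univ : Finset (Fin 2)),
      Function.update f j b₁ = Function.update f j b₂ → b₁ = b₂ := by
    intro b₁ _ b₂ _ h
    have := congrFun h j
    simpa using this
  rw [← Finset.sum_image hinj]
  refine (Finset.sum_subset (Finset.subset_univ _) ?_).symm
  intro h _ hmem
  apply hT
  intro hc
  apply hmem
  refine Finset.mem_image.mpr ⟨h j, Finset.mem_univ _, ?_⟩
  funext m
  by_cases hm : m = j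
  · subst hm; simp
  · rw [Function.update_of_ne hm]
    exact (hc m hm).symm

lemma siteOp_mul_same {N : ℕ} (P Q : Matrix (Fin 2) (Fin 2) ℂ) (j : Fin (N + 1)) :
    siteOp P j * siteOp Q j = siteOp (P * Q) j := by
  ext f g
  rw [Matrix.mul_apply]
  rw [sum_update (fun h => siteOp P j f h * siteOp Q j h g) f j (by
    intro h hc
    have : ¬ ∀ k, k ≠ j → f k = h k := fun H => hc fun m hm => (H m hm).symm
    simp [siteOp_apply', this])]
  rw [siteOp_apply', Matrix.mul_apply, Finset.sum_mul]
  refine Finset.sum_congr rfl fun b _ => ?_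
  rw [siteOp_apply', siteOp_apply', Function.update_self,
    if_pos (fun k hk => by rw [Function.update_of_ne hk])]
  have hiff : (∀ k, k ≠ j → Function.update f j b k = g k) ↔ (∀ k, k ≠ j → f k = g k) :=
    forall_congr' fun k => imp_congr_right fun hk => by rw [Function.update_of_ne hk]
  simp only [hiff]
  ring

lemma siteOp_mul_apply_ne {N : ℕ} (P Q : Matrix (Fin 2) (Fin 2) ℂ) {j k : Fin (N + 1)}
    (hjk : j ≠ k) (f g) :
    (siteOp P j * siteOp Q k) f g =
      P (f j) (g j) * Q (f k) (g k) *
        (if ∀ m, m ≠ j → m ≠ k → f m = g m then 1 else 0) := by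
  rw [Matrix.mul_apply]
  rw [sum_update (fun h => siteOp P j f h * siteOp Q k h g) f j (by
    intro h hc
    have : ¬ ∀ m, m ≠ j → f m = h m := fun H => hc fun m hm => (H m hm).symm
    simp [siteOp_apply', this])]
  have key : ∀ b : Fin 2,
      siteOp P j f (Function.update f j b) * siteOp Q k (Function.update f j b) g =
      if b = g j then
        P (f j) b * Q (f k) (g k) * (if ∀ m, m ≠ j → m ≠ k → f m = g m then 1 else 0)
      else 0 := by
    intro b
    rw [siteOp_apply', siteOp_apply', Function.update_self,
      if_pos (fun m hm => by rw [Function.update_of_ne hm]),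
      Function.update_of_ne (Ne.symm hjk)]
    have hiff : (∀ m, m ≠ k → Function.update f j b m = g m) ↔
        (b = g j ∧ ∀ m, m ≠ j → m ≠ k → f m = g m) := by
      constructor
      · intro H
        refine ⟨by simpa using H j hjk, fun m hmj hmk => ?_⟩
        have := H m hmk
        rwa [Function.update_of_ne hmj] at this
      · rintro ⟨hb, H⟩ m hmk
        by_cases hmj : m = j
        · subst hmj; simpa using hb
        · rw [Function.update_of_ne hmj]; exact H m hmj hmk
    simp only [hiff]
    by_cases hb : b = g j
    · simp [hb]
    · simp [hb]
  simp only [key]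
  simp

lemma siteOp_comm {N : ℕ} {j k : Fin (N + 1)} (hjk : j ≠ k) (P Q : Matrix (Fin 2) (Fin 2) ℂ) :
    siteOp P j * siteOp Q k = siteOp Q k * siteOp P j := by
  ext f g
  rw [siteOp_mul_apply_ne P Q hjk, siteOp_mul_apply_ne Q P hjk.symm]
  have hiff : (∀ m, m ≠ k → m ≠ j → f m = g m) ↔ (∀ m, m ≠ j → m ≠ k → f m = g m) :=
    ⟨fun H m h1 h2 => H m h2 h1, fun H m h1 h2 => H m h2 h1⟩
  simp only [hiff]
  ring

lemma siteOp_smul {N : ℕ} (c : ℂ) (P : Matrix (Fin 2) (Fin 2) ℂ) (j : Fin (N + 1)) :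
    siteOp (c • P) j = c • siteOp P j := by
  ext f g
  simp [siteOp, Matrix.smul_apply]
  ring

lemma pauli_xy : σx * σy = Complex.I • σz := by
  ext i j
  fin_cases i <;> fin_cases j <;>
    simp [σx, σy, σz, Matrix.mul_apply, Fin.sum_univ_two]

lemma pauli_yx : σy * σx = (-Complex.I) • σz := by
  ext i j
  fin_cases i <;> fin_cases j <;>
    simp [σx, σy, σz, Matrix.mul_apply, Fin.sum_univ_two]

/-- The commutator of the two central-spin interaction operators
`H_CS = ∑_{i=1}^N σx⁽⁰⁾ σx⁽ⁱ⁾` and `H_CS' = ∑_{j=1}^N σy⁽⁰⁾ σx⁽ʲ⁾` equals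
`2i σz⁽⁰⁾ (∑_{i=1}^N σx⁽ⁱ⁾)²`. -/
theorem central_spin_commutator (N : ℕ) (hN : 1 ≤ N) :
    ⁅∑ i : Fin N, siteOp σx 0 * siteOp σx (per i),
      ∑ j : Fin N, siteOp σy 0 * siteOp σx (per j)⁆
      = (2 * Complex.I) • (siteOp σz 0 * (∑ i : Fin N, siteOp σx (per i)) ^ 2) := by
  have hp : ∀ i : Fin N, per i ≠ (0 : Fin (N + 1)) := fun i => Fin.succ_ne_zero i
  rw [Ring.lie_def, Finset.sum_mul_sum, Finset.sum_mul_sum, sq, Finset.sum_mul_sum,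
    Finset.mul_sum, Finset.smul_sum]
  simp only [Finset.mul_sum, Finset.smul_sum]
  rw [← Finset.sum_sub_distrib]
  refine Finset.sum_congr rfl fun a _ => ?_
  rw [← Finset.sum_sub_distrib]
  refine Finset.sum_congr rfl fun b _ => ?_
  have c1 : siteOp σx (per a) * siteOp σy 0 = siteOp σy 0 * siteOp σx (per a) :=
    siteOp_comm (hp a) _ _
  have c2 : siteOp σx (per a) * siteOp σx 0 = siteOp σx 0 * siteOp σx (per a) :=
    siteOp_comm (hp a) _ _
  have e1 : siteOp σx 0 * siteOp σx (per a) * (siteOp σy 0 * siteOp σx (per b))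
      = Complex.I • (siteOp σz 0 * (siteOp σx (per a) * siteOp σx (per b))) := by
    rw [mul_assoc, ← mul_assoc (siteOp σx (per a)), c1, mul_assoc (siteOp σy 0),
      ← mul_assoc (siteOp σx 0), siteOp_mul_same, pauli_xy, siteOp_smul, Matrix.smul_mul]
  have e2 : siteOp σy 0 * siteOp σx (per a) * (siteOp σx 0 * siteOp σx (per b))
      = (-Complex.I) • (siteOp σz 0 * (siteOp σx (per a) * siteOp σx (per b))) := by
    rw [mul_assoc, ← mul_assoc (siteOp σx (per a)), c2, mul_assoc (siteOp σx 0),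
      ← mul_assoc (siteOp σy 0), siteOp_mul_same, pauli_yx, siteOp_smul, Matrix.smul_mul]
  rw [e1, e2, ← sub_smul, ← mul_assoc]
  congr 1
  ring
end

section
/- Fix N ≥ 1. Then the ℓ²→ℓ² operator norm of σz^{(0)} * (∑_{i=1}^N σx^{(i)})^2 on N+1 qubits equals N^2. Consequently ‖(2 * Complex.I) • (σz^{(0)} * (∑_{i=1}^N σx^{(i)})^2)‖ = 2 * N^2, so the dominant term of the MCS commutator scales quadratically with system size. -/
open scoped Matrix.Norms.L2Operator
open scoped Matrix

namespace MCSAux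

variable {N : ℕ}

/-- The delta product vanishes if some off-site coordinate disagrees. -/
lemma delta_prod_zero (f g : Fin (N + 1) → Fin 2) (j k : Fin (N + 1)) (hkj : k ≠ j)
    (h : f k ≠ g k) :
    ∏ k ∈ Finset.univ.erase j, (if f k = g k then (1 : ℂ) else 0) = 0 :=
  Finset.prod_eq_zero (Finset.mem_erase.mpr ⟨hkj, Finset.mem_univ _⟩) (if_neg h)

lemma delta_prod_update (f : Fin (N + 1) → Fin 2) (j : Fin (N + 1)) (b : Fin 2) :
    ∏ k ∈ Finset.univ.erase j, (if f k = (Function.update f j b) k then (1 : ℂ) else 0) = 1 := by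
  refine Finset.prod_eq_one fun k hk => ?_
  rw [Function.update_of_ne (Finset.ne_of_mem_erase hk)]
  simp

/-- Summing a function which vanishes whenever some coordinate other than `j` disagrees
with `f` reduces to a sum over the value at site `j`. -/
lemma sum_update (f : Fin (N + 1) → Fin 2) (j : Fin (N + 1))
    (F : (Fin (N + 1) → Fin 2) → ℂ)
    (hF : ∀ g : Fin (N + 1) → Fin 2, ∀ k, k ≠ j → g k ≠ f k → F g = 0) :
    ∑ g : Fin (N + 1) → Fin 2, F g = ∑ b : Fin 2, F (Function.update f j b) := by
  classical
  have h1 : ∑ g ∈ Finset.univ.image (Function.update f j), F g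
      = ∑ b : Fin 2, F (Function.update f j b) :=
    Finset.sum_image (fun a _ b _ hab => by simpa using congrFun hab j)
  rw [← h1]
  symm
  refine Finset.sum_subset (Finset.subset_univ _) fun g _ hg => ?_
  have hne : g ≠ Function.update f j (g j) := fun heq =>
    hg (Finset.mem_image.mpr ⟨g j, Finset.mem_univ _, heq.symm⟩)
  obtain ⟨k, hk⟩ := Function.ne_iff.mp hne
  have hkj : k ≠ j := by rintro rfl; simp at hk
  rw [Function.update_of_ne hkj] at hk
  exact hF g k hkj hk

lemma siteOp_mulVec (P : Matrix (Fin 2) (Fin 2) ℂ) (j : Fin (N + 1))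
    (x : (Fin (N + 1) → Fin 2) → ℂ) (f : Fin (N + 1) → Fin 2) :
    (siteOp P j *ᵥ x) f = ∑ b : Fin 2, P (f j) b * x (Function.update f j b) := by
  show ∑ g, siteOp P j f g * x g = _
  rw [sum_update f j (fun g => siteOp P j f g * x g)
    (fun g k hkj hgk => by
      simp only [siteOp]
      rw [delta_prod_zero f g j k hkj (Ne.symm hgk)]; ring)]
  refine Finset.sum_congr rfl fun b _ => ?_
  unfold siteOp
  rw [delta_prod_update, Function.update_self]
  ring

lemma siteOp_mul (P Q : Matrix (Fin 2) (Fin 2) ℂ) (j : Fin (N + 1)) :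
    siteOp (N := N) P j * siteOp Q j = siteOp (P * Q) j := by
  ext f g
  rw [Matrix.mul_apply]
  rw [sum_update f j (fun h => siteOp P j f h * siteOp Q j h g)
    (fun h k hkj hhk => by
      simp only [siteOp]
      rw [delta_prod_zero f h j k hkj (Ne.symm hhk)]; ring)]
  unfold siteOp
  rw [Matrix.mul_apply, Finset.sum_mul]
  refine Finset.sum_congr rfl fun b _ => ?_
  rw [delta_prod_update, Function.update_self]
  have : ∀ k, k ≠ j → Function.update f j b k = f k := fun k hk =>
    Function.update_of_ne hk _ _
  have hprod : ∏ k ∈ Finset.univ.erase j, (if (Function.update f j b) k = g k then (1 : ℂ) else 0)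
      = ∏ k ∈ Finset.univ.erase j, (if f k = g k then (1 : ℂ) else 0) := by
    refine Finset.prod_congr rfl fun k hk => ?_
    rw [this k (Finset.ne_of_mem_erase hk)]
  rw [hprod]
  ring

lemma siteOp_one (j : Fin (N + 1)) : siteOp (N := N) 1 j = 1 := by
  ext f g
  simp only [siteOp, Matrix.one_apply]
  by_cases h : f = g
  · subst h; simp
  · obtain ⟨k, hk⟩ := Function.ne_iff.mp h
    by_cases hkj : k = j
    · subst hkj
      rw [if_neg hk, if_neg h]; ring
    · rw [delta_prod_zero f g j k hkj hk, if_neg h]; ring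

lemma siteOp_conjTranspose (P : Matrix (Fin 2) (Fin 2) ℂ) (j : Fin (N + 1)) :
    (siteOp (N := N) P j)ᴴ = siteOp Pᴴ j := by
  ext f g
  simp only [Matrix.conjTranspose_apply, siteOp, star_mul']
  have hprod : star (∏ k ∈ Finset.univ.erase j, (if g k = f k then (1 : ℂ) else 0))
      = ∏ k ∈ Finset.univ.erase j, (if f k = g k then (1 : ℂ) else 0) := by
    rw [star_prod]
    refine Finset.prod_congr rfl fun k _ => ?_
    by_cases h : f k = g k
    · rw [if_pos h, if_pos h.symm, star_one]
    · rw [if_neg h, if_neg (Ne.symm h), star_zero]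
  rw [hprod, mul_comm]

lemma σz_conjTranspose : σzᴴ = σz := by
  ext i j; fin_cases i <;> fin_cases j <;> simp [σz]

lemma σx_conjTranspose : σxᴴ = σx := by
  ext i j; fin_cases i <;> fin_cases j <;> simp [σx]

lemma σz_sq : σz * σz = 1 := by
  ext i j; fin_cases i <;> fin_cases j <;>
    simp [σz, Matrix.mul_apply, Fin.sum_univ_two, Matrix.one_apply]

lemma σx_sq : σx * σx = 1 := by
  ext i j; fin_cases i <;> fin_cases j <;>
    simp [σx, Matrix.mul_apply, Fin.sum_univ_two, Matrix.one_apply]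

lemma norm_siteOp_eq_one (P : Matrix (Fin 2) (Fin 2) ℂ) (j : Fin (N + 1))
    (hH : Pᴴ = P) (hsq : P * P = 1) : ‖siteOp (N := N) P j‖ = 1 := by
  have h2 : ‖siteOp (N := N) P j‖ * ‖siteOp (N := N) P j‖ = 1 := by
    rw [← Matrix.l2_opNorm_conjTranspose_mul_self, siteOp_conjTranspose, hH, siteOp_mul, hsq,
      siteOp_one]
    exact norm_one
  have := norm_nonneg (siteOp (N := N) P j)
  nlinarith

end MCSAux

open MCSAux in
/-- The ℓ²→ℓ² operator norm of `σz⁽⁰⁾ (∑_{i=1}^N σx⁽ⁱ⁾)²` on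
`N+1` qubits equals `N²`, and consequently the dominant term
`2i σz⁽⁰⁾ (∑ᵢ σx⁽ⁱ⁾)²` of the MCS commutator has norm `2 N²`. -/
theorem dominant_term_norm (N : ℕ) (hN : 1 ≤ N) :
    ‖siteOp σz 0 * (∑ i : Fin N, siteOp σx (per i)) ^ 2‖ = (N : ℝ) ^ 2 ∧
    ‖(2 * Complex.I) • (siteOp σz 0 * (∑ i : Fin N, siteOp σx (per i)) ^ 2)‖
      = 2 * (N : ℝ) ^ 2 := by
  set S : Matrix (Fin (N + 1) → Fin 2) (Fin (N + 1) → Fin 2) ℂ :=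
    ∑ i : Fin N, siteOp σx (per i) with hSdef
  set M : Matrix (Fin (N + 1) → Fin 2) (Fin (N + 1) → Fin 2) ℂ := siteOp σz 0 * S ^ 2 with hMdef
  -- Upper bound
  have hznorm : ‖siteOp (N := N) σz 0‖ = 1 :=
    norm_siteOp_eq_one σz 0 σz_conjTranspose σz_sq
  have hxnorm : ∀ i : Fin N, ‖siteOp (N := N) σx (per i)‖ = 1 := fun i =>
    norm_siteOp_eq_one σx (per i) σx_conjTranspose σx_sq
  have hSle : ‖S‖ ≤ (N : ℝ) := by
    refine (norm_sum_le _ _).trans ?_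
    simp [hxnorm]
  have hupper : ‖M‖ ≤ (N : ℝ) ^ 2 := by
    calc ‖M‖ ≤ ‖siteOp (N := N) σz 0‖ * ‖S ^ 2‖ := Matrix.l2_opNorm_mul _ _
    _ = ‖S * S‖ := by rw [hznorm, one_mul, sq]
    _ ≤ ‖S‖ * ‖S‖ := Matrix.l2_opNorm_mul _ _
    _ ≤ (N : ℝ) * (N : ℝ) := by
        have h0 : (0 : ℝ) ≤ ‖S‖ := norm_nonneg _
        exact mul_le_mul hSle hSle h0 (Nat.cast_nonneg N)
    _ = (N : ℝ) ^ 2 := (sq (N : ℝ)).symm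
  -- Lower bound via the constant vector
  set v' : (Fin (N + 1) → Fin 2) → ℂ := fun _ => 1 with hv'
  have hxv : ∀ j : Fin (N + 1), siteOp (N := N) σx j *ᵥ v' = v' := by
    intro j
    funext f
    rw [siteOp_mulVec]
    have : ∀ a : Fin 2, σx a 0 + σx a 1 = 1 := by
      intro a; fin_cases a <;> simp [σx]
    simp [hv', Fin.sum_univ_two, this (f j)]
  have hSv : S *ᵥ v' = (N : ℂ) • v' := by
    funext f
    have : (S *ᵥ v') f = ∑ i : Fin N, (siteOp σx (per i) *ᵥ v') f := by
      simp only [hSdef, Matrix.mulVec, dotProduct, Matrix.sum_apply, Finset.sum_mul]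
      rw [Finset.sum_comm]
    rw [this]
    simp only [hxv]
    simp [hv']
  have hS2v : S ^ 2 *ᵥ v' = ((N : ℂ) ^ 2) • v' := by
    rw [sq, ← Matrix.mulVec_mulVec, hSv, Matrix.mulVec_smul, hSv, smul_smul, ← sq]
  set w' : (Fin (N + 1) → Fin 2) → ℂ := siteOp σz 0 *ᵥ v' with hw'
  have hwf : ∀ f : Fin (N + 1) → Fin 2, ‖w' f‖ = 1 := by
    intro f
    rw [hw', siteOp_mulVec]
    have : ∀ a : Fin 2, σz a 0 + σz a 1 = if a = 0 then 1 else -1 := by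
      intro a; fin_cases a <;> simp [σz]
    simp only [hv', mul_one, Fin.sum_univ_two, this (f 0)]
    by_cases h : f 0 = 0 <;> simp [h]
  have hMv : M *ᵥ v' = ((N : ℂ) ^ 2) • w' := by
    rw [hMdef, ← Matrix.mulVec_mulVec, hS2v, Matrix.mulVec_smul, hw']
  -- Norms of the vectors
  have hcard : (0 : ℝ) < (Fintype.card (Fin (N + 1) → Fin 2) : ℝ) := by
    have : 0 < Fintype.card (Fin (N + 1) → Fin 2) := Fintype.card_pos
    exact_mod_cast this
  set v : EuclideanSpace ℂ (Fin (N + 1) → Fin 2) := (EuclideanSpace.equiv _ ℂ).symm v' with hv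
  have hvnorm : ‖v‖ = Real.sqrt (Fintype.card (Fin (N + 1) → Fin 2)) := by
    rw [EuclideanSpace.norm_eq]
    congr 1
    simp [hv, hv', EuclideanSpace.equiv, Finset.card_univ]
  have hwnorm : ‖(EuclideanSpace.equiv (Fin (N + 1) → Fin 2) ℂ).symm w'‖
      = Real.sqrt (Fintype.card (Fin (N + 1) → Fin 2)) := by
    rw [EuclideanSpace.norm_eq]
    have h1 : ∀ f : Fin (N + 1) → Fin 2,
        ‖((EuclideanSpace.equiv (Fin (N + 1) → Fin 2) ℂ).symm w') f‖ ^ 2 = 1 := by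
      intro f
      have h2 : ((EuclideanSpace.equiv (Fin (N + 1) → Fin 2) ℂ).symm w') f = w' f := rfl
      rw [h2, hwf f, one_pow]
    congr 1
    rw [Finset.sum_congr rfl (fun f _ => h1 f), Finset.sum_const, Finset.card_univ,
      nsmul_eq_mul, mul_one]
  have hvpos : 0 < ‖v‖ := by
    rw [hvnorm]
    exact Real.sqrt_pos.mpr hcard
  have hlower : (N : ℝ) ^ 2 ≤ ‖M‖ := by
    have hkey := Matrix.l2_opNorm_mulVec M v
    have hMv' : M *ᵥ v = ((N : ℂ) ^ 2) • w' := hMv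
    rw [hMv'] at hkey
    have heq : ‖(EuclideanSpace.equiv (Fin (N + 1) → Fin 2) ℂ).symm (((N : ℂ) ^ 2) • w')‖
        = (N : ℝ) ^ 2 * ‖(EuclideanSpace.equiv (Fin (N + 1) → Fin 2) ℂ).symm w'‖ := by
      rw [map_smul, norm_smul]
      congr 1
      simp
    rw [heq, hwnorm, ← hvnorm] at hkey
    calc (N : ℝ) ^ 2 = (N : ℝ) ^ 2 * ‖v‖ / ‖v‖ := by field_simp
    _ ≤ ‖M‖ * ‖v‖ / ‖v‖ := by gcongr
    _ = ‖M‖ := by field_simp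
  have hmain : ‖M‖ = (N : ℝ) ^ 2 := le_antisymm hupper hlower
  refine ⟨hmain, ?_⟩
  rw [norm_smul, hmain]
  simp [Complex.norm_I]
end

section
/- Fix N ≥ 3, let H_B and H_C be the MCS battery and charger Hamiltonians on N+1 qubits, and let φ be the product state |+z⟩₀ ⊗ |+x⟩^{⊗N}, i.e. the unit vector φ f = if f 0 = 0 then (2:ℂ)^(-(N:ℝ)/2) else 0. Then star φ ⬝ᵥ (⁅H_B, H_C⁆.mulVec φ) = 2 * Complex.I * N^2, and consequently ‖⁅H_B, H_C⁆‖ ≥ 2 * N^2. Thus the commutator between the MCS battery and charger exhibits superextensive (quadratic) growth with system size. -/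
open scoped Matrix.Norms.L2Operator
open scoped Matrix

/-- The cyclic successor `i ⊕ 1` among the peripheral sites `{1, …, N}`. -/
def perS {N : ℕ} (i : Fin N) : Fin (N + 1) :=
  ⟨(i.1 + 1) % N + 1, Nat.succ_lt_succ (Nat.mod_lt _ i.pos)⟩
/-- The cyclic predecessor `i ⊖ 1` among the peripheral sites `{1, …, N}`. -/
def perP {N : ℕ} (i : Fin N) : Fin (N + 1) :=
  ⟨(i.1 + (N - 1)) % N + 1, Nat.succ_lt_succ (Nat.mod_lt _ i.pos)⟩

/-- The modified central-spin (MCS) battery Hamiltonian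
`H_B = ∑_{i=1}^N σx⁽⁰⁾ σx⁽ⁱ⁾ + ∑_{i=1}^N σz⁽ⁱ⁾ σz⁽ⁱ⊕¹⁾` on `N+1` qubits (PBC). -/
noncomputable def HB (N : ℕ) :
    Matrix (Fin (N + 1) → Fin 2) (Fin (N + 1) → Fin 2) ℂ :=
  (∑ i : Fin N, siteOp σx 0 * siteOp σx (per i)) +
  (∑ i : Fin N, siteOp σz (per i) * siteOp σz (perS i))

/-- The modified central-spin (MCS) charger Hamiltonian
`H_C = ∑_{i=1}^N σy⁽⁰⁾ σx⁽ⁱ⁾ + ∑_{i=1}^N σz⁽ⁱ⁾ σz⁽ⁱ⊕¹⁾` on `N+1` qubits (PBC). -/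
noncomputable def HC (N : ℕ) :
    Matrix (Fin (N + 1) → Fin 2) (Fin (N + 1) → Fin 2) ℂ :=
  (∑ i : Fin N, siteOp σy 0 * siteOp σx (per i)) +
  (∑ i : Fin N, siteOp σz (per i) * siteOp σz (perS i))

/-- The product state `|+z⟩₀ ⊗ |+x⟩^{⊗N}`: the unit vector
`φ f = if f 0 = 0 then 2^{-N/2} else 0`. -/
noncomputable def φprod (N : ℕ) : (Fin (N + 1) → Fin 2) → ℂ :=
  fun f => if f 0 = 0 then (((2 : ℝ) ^ (-(N : ℝ) / 2) : ℝ) : ℂ) else 0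

namespace MCSaux

variable {N : ℕ}

/-- product vector -/
def PV {N : ℕ} (v : Fin (N+1) → Fin 2 → ℂ) : (Fin (N+1) → Fin 2) → ℂ :=
  fun f => ∏ k, v k (f k)

noncomputable def upd {N : ℕ} (P : Matrix (Fin 2) (Fin 2) ℂ) (j : Fin (N+1))
    (v : Fin (N+1) → Fin 2 → ℂ) : Fin (N+1) → Fin 2 → ℂ :=
  Function.update v j (P.mulVec (v j))

lemma upd_ne {P : Matrix (Fin 2) (Fin 2) ℂ} {s k : Fin (N+1)} (v : Fin (N+1) → Fin 2 → ℂ)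
    (h : k ≠ s) : upd P s v k = v k := Function.update_of_ne h _ _

lemma upd_same {P : Matrix (Fin 2) (Fin 2) ℂ} {s : Fin (N+1)} (v : Fin (N+1) → Fin 2 → ℂ) :
    upd P s v s = P.mulVec (v s) := Function.update_self _ _ _

lemma siteOp_mulVec (P : Matrix (Fin 2) (Fin 2) ℂ) (j : Fin (N+1)) (v : Fin (N+1) → Fin 2 → ℂ) :
    (siteOp P j).mulVec (PV v) = PV (upd P j v) := by
  funext f
  have hsub : Finset.image (Function.update f j) Finset.univ ⊆ Finset.univ :=
    Finset.subset_univ _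
  have hzero : ∀ g ∈ Finset.univ,
      g ∉ Finset.image (Function.update f j) Finset.univ →
      siteOp P j f g * PV v g = 0 := by
    intro g _ hg
    have : ¬ (∀ k, k ≠ j → f k = g k) := by
      intro h
      apply hg
      refine Finset.mem_image.2 ⟨g j, Finset.mem_univ _, ?_⟩
      funext k
      by_cases hk : k = j
      · subst hk; simp
      · rw [Function.update_of_ne hk]; exact h k hk
    push_neg at this
    obtain ⟨k, hkj, hk⟩ := this
    have : siteOp P j f g = 0 := by
      unfold siteOp
      rw [Finset.prod_eq_zero (Finset.mem_erase.2 ⟨hkj, Finset.mem_univ k⟩)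
        (show (if f k = g k then (1:ℂ) else 0) = 0 from if_neg hk)]
      ring
    rw [this, zero_mul]
  show ∑ g, siteOp P j f g * PV v g = PV (upd P j v) f
  rw [← Finset.sum_subset hsub hzero,
      Finset.sum_image (fun a _ b _ h => Function.update_injective f j h)]
  have heval : ∀ a : Fin 2,
      siteOp P j f (Function.update f j a) * PV v (Function.update f j a)
        = P (f j) a * (v j a * ∏ k ∈ Finset.univ.erase j, v k (f k)) := by
    intro a
    have h1 : siteOp P j f (Function.update f j a) = P (f j) a := by
      unfold siteOp
      rw [Function.update_self]
      rw [Finset.prod_congr rfl (fun k hk => by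
        rw [Function.update_of_ne (Finset.mem_erase.1 hk).1, if_pos rfl])]
      simp
    have h2 : PV v (Function.update f j a)
        = v j a * ∏ k ∈ Finset.univ.erase j, v k (f k) := by
      unfold PV
      rw [← Finset.mul_prod_erase _ _ (Finset.mem_univ j), Function.update_self]
      congr 1
      exact Finset.prod_congr rfl fun k hk =>
        by rw [Function.update_of_ne (Finset.mem_erase.1 hk).1]
    rw [h1, h2]
  rw [Finset.sum_congr rfl fun a _ => heval a]
  unfold PV upd
  rw [← Finset.mul_prod_erase _ _ (Finset.mem_univ j), Function.update_self]
  have : ∀ k ∈ Finset.univ.erase j, Function.update v j (P.mulVec (v j)) k (f k) = v k (f k) :=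
    fun k hk => by rw [Function.update_of_ne (Finset.mem_erase.1 hk).1]
  rw [Finset.prod_congr rfl this]
  rw [Matrix.mulVec, dotProduct, Finset.sum_mul]
  exact Finset.sum_congr rfl fun a _ => by ring

lemma dot_PV (u v : Fin (N+1) → Fin 2 → ℂ) :
    star (PV u) ⬝ᵥ (PV v) = ∏ k, star (u k) ⬝ᵥ v k := by
  have : ∀ k : Fin (N+1), star (u k) ⬝ᵥ v k = ∑ a, star (u k a) * v k a := fun k => rfl
  simp only [this]
  rw [Fintype.prod_sum]
  show ∑ f, star (PV u) f * PV v f = _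
  refine Finset.sum_congr rfl fun f _ => ?_
  show star (PV u f) * PV v f = _
  unfold PV
  rw [star_prod, ← Finset.prod_mul_distrib]

noncomputable def c : ℂ := (((2:ℝ) ^ (-(1:ℝ)/2) : ℝ) : ℂ)

noncomputable def v₀ (N : ℕ) : Fin (N+1) → Fin 2 → ℂ :=
  fun k => if k = 0 then ![1,0] else ![c,c]

lemma v₀_zero : v₀ N 0 = ![1,0] := if_pos rfl
lemma v₀_ne {k : Fin (N+1)} (h : k ≠ 0) : v₀ N k = ![c,c] := if_neg h

lemma c_sq : c * c = 1/2 := by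
  unfold c
  rw [← Complex.ofReal_mul, ← Real.rpow_add two_pos]
  norm_num

lemma φprod_eq : φprod N = PV (v₀ N) := by
  funext f
  unfold φprod PV
  rw [← Finset.mul_prod_erase _ _ (Finset.mem_univ (0 : Fin (N+1))), v₀_zero]
  have hcc : ∀ x : Fin 2, (![c,c]) x = c := by intro x; fin_cases x <;> simp
  have he0 : ∀ x : Fin 2, (![(1:ℂ),0]) x = if x = 0 then 1 else 0 := by
    intro x; fin_cases x <;> simp
  have h2 : ∀ k ∈ Finset.univ.erase (0 : Fin (N+1)), v₀ N k (f k) = c := by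
    intro k hk
    rw [v₀_ne (Finset.mem_erase.1 hk).1, hcc]
  rw [Finset.prod_congr rfl h2, Finset.prod_const]
  have hcard : (Finset.univ.erase (0 : Fin (N+1))).card = N := by
    rw [Finset.card_erase_of_mem (Finset.mem_univ _), Finset.card_univ]
    simp
  rw [hcard]
  have hc : c ^ N = (((2:ℝ) ^ (-(N:ℝ)/2) : ℝ) : ℂ) := by
    unfold c
    rw [← Complex.ofReal_pow, ← Real.rpow_natCast ((2:ℝ) ^ (-(1:ℝ)/2)) N,
        ← Real.rpow_mul (by norm_num)]
    ring_nf
  rw [hc, he0]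
  split <;> ring

lemma dot_e0_e0 : star (![(1:ℂ),0]) ⬝ᵥ ![(1:ℂ),0] = 1 := by
  simp [dotProduct, Fin.sum_univ_two]
lemma dot_px_px : star (![c,c]) ⬝ᵥ ![c,c] = 1 := by
  have hc : (starRingEnd ℂ) c = c := by
    unfold c; exact Complex.conj_ofReal _
  simp [dotProduct, Fin.sum_univ_two, hc]
  rw [← two_mul, c_sq]; norm_num

lemma sx_px : σx.mulVec ![c,c] = ![c,c] := by
  funext a; fin_cases a <;> simp [σx, Matrix.mulVec, dotProduct, Fin.sum_univ_two]
lemma sx_e0 : σx.mulVec ![(1:ℂ),0] = ![0,1] := by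
  funext a; fin_cases a <;> simp [σx, Matrix.mulVec, dotProduct, Fin.sum_univ_two]
lemma sy_e0 : σy.mulVec ![(1:ℂ),0] = ![0,Complex.I] := by
  funext a; fin_cases a <;> simp [σy, Matrix.mulVec, dotProduct, Fin.sum_univ_two]
lemma sx_yv : σx.mulVec ![(0:ℂ),Complex.I] = ![Complex.I,0] := by
  funext a; fin_cases a <;> simp [σx, Matrix.mulVec, dotProduct, Fin.sum_univ_two]
lemma sy_xv : σy.mulVec ![(0:ℂ),1] = ![-Complex.I,0] := by
  funext a; fin_cases a <;> simp [σy, Matrix.mulVec, dotProduct, Fin.sum_univ_two]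

lemma dot_e0_I : star (![(1:ℂ),0]) ⬝ᵥ ![Complex.I,0] = Complex.I := by
  simp [dotProduct, Fin.sum_univ_two]
lemma dot_e0_negI : star (![(1:ℂ),0]) ⬝ᵥ ![-Complex.I,0] = -Complex.I := by
  simp [dotProduct, Fin.sum_univ_two]
lemma dot_e0_01 : star (![(1:ℂ),0]) ⬝ᵥ ![(0:ℂ),1] = 0 := by
  simp [dotProduct, Fin.sum_univ_two]
lemma dot_e0_0I : star (![(1:ℂ),0]) ⬝ᵥ ![(0:ℂ),Complex.I] = 0 := by
  simp [dotProduct, Fin.sum_univ_two]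

lemma EX4 (P₁ P₂ P₃ P₄ : Matrix (Fin 2) (Fin 2) ℂ) (s₁ s₂ s₃ s₄ : Fin (N+1)) :
    star (PV (v₀ N)) ⬝ᵥ
      ((siteOp P₁ s₁ * siteOp P₂ s₂ * (siteOp P₃ s₃ * siteOp P₄ s₄)).mulVec (PV (v₀ N)))
      = ∏ k, star (v₀ N k) ⬝ᵥ
          (upd P₁ s₁ (upd P₂ s₂ (upd P₃ s₃ (upd P₄ s₄ (v₀ N)))) k) := by
  rw [← Matrix.mulVec_mulVec, ← Matrix.mulVec_mulVec, ← Matrix.mulVec_mulVec,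
      siteOp_mulVec, siteOp_mulVec, siteOp_mulVec, siteOp_mulVec, dot_PV]

/-- A·B-type terms: both site-0 operators, σx's on peripheral sites. -/
lemma shape_main (P₁ P₃ : Matrix (Fin 2) (Fin 2) ℂ) (p q : Fin (N+1))
    (hp : p ≠ 0) (hq : q ≠ 0) :
    ∏ k, star (v₀ N k) ⬝ᵥ
        (upd P₁ 0 (upd σx p (upd P₃ 0 (upd σx q (v₀ N)))) k)
      = star (![(1:ℂ),0]) ⬝ᵥ (P₁.mulVec (P₃.mulVec ![(1:ℂ),0])) := by
  set w := upd P₁ 0 (upd σx p (upd P₃ 0 (upd σx q (v₀ N)))) with hw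
  have h0 : w 0 = P₁.mulVec (P₃.mulVec ![(1:ℂ),0]) := by
    rw [hw, upd_same, upd_ne _ (Ne.symm hp), upd_same, upd_ne _ (Ne.symm hq), v₀_zero]
  have hk : ∀ k : Fin (N+1), k ≠ 0 → w k = ![c,c] := by
    intro k hk0
    rw [hw, upd_ne _ hk0]
    by_cases hkp : k = p
    · subst hkp
      rw [upd_same, upd_ne _ hp]
      by_cases hkq : k = q
      · subst hkq; rw [upd_same, v₀_ne hk0, sx_px, sx_px]
      · rw [upd_ne _ hkq, v₀_ne hk0, sx_px]
    · rw [upd_ne _ hkp, upd_ne _ hk0]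
      by_cases hkq : k = q
      · subst hkq; rw [upd_same, v₀_ne hk0, sx_px]
      · rw [upd_ne _ hkq, v₀_ne hk0]
  rw [Finset.prod_eq_single (0 : Fin (N+1))
      (fun k _ hk0 => by rw [hk k hk0, v₀_ne hk0, dot_px_px])
      (fun h => absurd (Finset.mem_univ _) h),
      h0, v₀_zero]

/-- terms with the ZZ factor on the right: single site-0 operator `P₁`. -/
lemma shape_zr (P₁ : Matrix (Fin 2) (Fin 2) ℂ) (p q r : Fin (N+1))
    (hp : p ≠ 0) (hq : q ≠ 0) (hr : r ≠ 0)
    (h : star (![(1:ℂ),0]) ⬝ᵥ (P₁.mulVec ![(1:ℂ),0]) = 0) :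
    ∏ k, star (v₀ N k) ⬝ᵥ
        (upd P₁ 0 (upd σx p (upd σz q (upd σz r (v₀ N)))) k) = 0 := by
  refine Finset.prod_eq_zero (Finset.mem_univ (0 : Fin (N+1))) ?_
  rw [upd_same, upd_ne _ (Ne.symm hp), upd_ne _ (Ne.symm hq), upd_ne _ (Ne.symm hr),
      v₀_zero]
  exact h

/-- terms with the ZZ factor on the left: single site-0 operator `P₃`. -/
lemma shape_zl (P₃ : Matrix (Fin 2) (Fin 2) ℂ) (p q r : Fin (N+1))
    (hp : p ≠ 0) (hq : q ≠ 0) (hr : r ≠ 0)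
    (h : star (![(1:ℂ),0]) ⬝ᵥ (P₃.mulVec ![(1:ℂ),0]) = 0) :
    ∏ k, star (v₀ N k) ⬝ᵥ
        (upd σz q (upd σz r (upd P₃ 0 (upd σx p (v₀ N)))) k) = 0 := by
  refine Finset.prod_eq_zero (Finset.mem_univ (0 : Fin (N+1))) ?_
  rw [upd_ne _ (Ne.symm hq), upd_ne _ (Ne.symm hr), upd_same, upd_ne _ (Ne.symm hp),
      v₀_zero]
  exact h

lemma per_ne_zero (i : Fin N) : per i ≠ 0 := Fin.succ_ne_zero i
lemma perS_ne_zero (i : Fin N) : perS i ≠ 0 := by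
  intro h
  have := congrArg Fin.val h
  simp [perS] at this


lemma sum_mulVec {ι m n : Type*} [Fintype n] (s : Finset ι)
    (M : ι → Matrix m n ℂ) (v : n → ℂ) :
    (∑ i ∈ s, M i).mulVec v = ∑ i ∈ s, (M i).mulVec v := by
  ext x
  simp only [Matrix.mulVec, dotProduct, Finset.sum_apply, Finset.sum_mul,
    Matrix.sum_apply]
  rw [Finset.sum_comm]

lemma dot_sum {ι n : Type*} [Fintype n] (s : Finset ι) (u : n → ℂ) (w : ι → n → ℂ) :
    u ⬝ᵥ (∑ i ∈ s, w i) = ∑ i ∈ s, u ⬝ᵥ w i := by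
  simp only [dotProduct, Finset.sum_apply, Finset.mul_sum]
  rw [Finset.sum_comm]

end MCSaux

open MCSaux in
/-- In the product state `|+z⟩₀ ⊗ |+x⟩^{⊗N}`, the expectation
value of the MCS commutator is exactly `2 i N²`; consequently
`‖⁅H_B, H_C⁆‖ ≥ 2N²`, i.e. the commutator grows superextensively
(quadratically) with system size. -/
theorem mcs_commutator_superextensive (N : ℕ) (hN : 3 ≤ N) :
    star (φprod N) ⬝ᵥ ((⁅HB N, HC N⁆).mulVec (φprod N))
        = 2 * Complex.I * (N : ℂ) ^ 2 ∧
    2 * (N : ℝ) ^ 2 ≤ ‖⁅HB N, HC N⁆‖ := by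
  classical
  set A : Fin N → Matrix (Fin (N+1) → Fin 2) (Fin (N+1) → Fin 2) ℂ :=
    fun i => siteOp σx 0 * siteOp σx (per i) with hA
  set B : Fin N → Matrix (Fin (N+1) → Fin 2) (Fin (N+1) → Fin 2) ℂ :=
    fun i => siteOp σy 0 * siteOp σx (per i) with hB
  set Z : Fin N → Matrix (Fin (N+1) → Fin 2) (Fin (N+1) → Fin 2) ℂ :=
    fun i => siteOp σz (per i) * siteOp σz (perS i) with hZ
  have hcomm : ⁅HB N, HC N⁆ =
      ∑ i : Fin N, ∑ j : Fin N,
        ((A i * B j - B i * A j) + (A i * Z j - B i * Z j) + (Z i * B j - Z i * A j)) := by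
    simp only [Ring.lie_def, HB, HC]
    simp only [add_mul, mul_add, Finset.sum_mul_sum, ← Finset.sum_add_distrib,
      ← Finset.sum_sub_distrib]
    refine Finset.sum_congr rfl fun i _ => Finset.sum_congr rfl fun j _ => ?_
    abel
  have hterm : ∀ i j : Fin N,
      star (PV (v₀ N)) ⬝ᵥ
        (((A i * B j - B i * A j) + (A i * Z j - B i * Z j)
            + (Z i * B j - Z i * A j)).mulVec (PV (v₀ N))) = 2 * Complex.I := by
    intro i j
    simp only [Matrix.add_mulVec, Matrix.sub_mulVec, dotProduct_add,
      dotProduct_sub, hA, hB, hZ]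
    rw [EX4, EX4, EX4, EX4, EX4, EX4]
    rw [shape_main σx σy _ _ (per_ne_zero i) (per_ne_zero j),
        shape_main σy σx _ _ (per_ne_zero i) (per_ne_zero j),
        shape_zr σx _ _ _ (per_ne_zero i) (per_ne_zero j) (perS_ne_zero j)
          (by rw [sx_e0, dot_e0_01]),
        shape_zr σy _ _ _ (per_ne_zero i) (per_ne_zero j) (perS_ne_zero j)
          (by rw [sy_e0, dot_e0_0I]),
        shape_zl σy _ _ _ (per_ne_zero j) (per_ne_zero i) (perS_ne_zero i)
          (by rw [sy_e0, dot_e0_0I]),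
        shape_zl σx _ _ _ (per_ne_zero j) (per_ne_zero i) (perS_ne_zero i)
          (by rw [sx_e0, dot_e0_01])]
    rw [sy_e0, sx_yv, dot_e0_I, sx_e0, sy_xv, dot_e0_negI]
    ring
  have hexp : star (φprod N) ⬝ᵥ ((⁅HB N, HC N⁆).mulVec (φprod N))
      = 2 * Complex.I * (N : ℂ) ^ 2 := by
    rw [hcomm, φprod_eq, sum_mulVec, dot_sum]
    rw [Finset.sum_congr rfl (fun i _ => by rw [sum_mulVec, dot_sum])]
    rw [Finset.sum_congr rfl fun i _ => Finset.sum_congr rfl fun j _ => hterm i j]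
    simp [Finset.sum_const, Finset.card_univ]
    ring
  refine ⟨hexp, ?_⟩
  -- norm bound via Cauchy-Schwarz
  set ψ : EuclideanSpace ℂ (Fin (N+1) → Fin 2) :=
    (WithLp.equiv 2 _).symm (φprod N) with hψ
  set χ : EuclideanSpace ℂ (Fin (N+1) → Fin 2) :=
    (WithLp.equiv 2 _).symm ((⁅HB N, HC N⁆).mulVec (φprod N)) with hχ
  have hinner : (inner ℂ ψ χ : ℂ) = 2 * Complex.I * (N : ℂ) ^ 2 := by
    rw [hψ, hχ, WithLp.equiv_symm_apply, EuclideanSpace.inner_toLp_toLp, dotProduct_comm]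
    exact hexp
  have hψn : ‖ψ‖ = 1 := by
    have h1 : (inner ℂ ψ ψ : ℂ) = 1 := by
      rw [hψ, WithLp.equiv_symm_apply, EuclideanSpace.inner_toLp_toLp, dotProduct_comm, φprod_eq, dot_PV]
      refine Finset.prod_eq_one fun k _ => ?_
      by_cases hk : k = 0
      · subst hk; rw [v₀_zero, dot_e0_e0]
      · rw [v₀_ne hk, dot_px_px]
    rw [@norm_eq_sqrt_re_inner ℂ, h1]
    simp
  have hval : ‖(2 * Complex.I * (N : ℂ) ^ 2 : ℂ)‖ = 2 * (N : ℝ) ^ 2 := by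
    simp [norm_mul, Complex.norm_I]
  calc 2 * (N : ℝ) ^ 2 = ‖(inner ℂ ψ χ : ℂ)‖ := by rw [hinner, hval]
    _ ≤ ‖ψ‖ * ‖χ‖ := norm_inner_le_norm ψ χ
    _ = ‖χ‖ := by rw [hψn, one_mul]
    _ ≤ ‖⁅HB N, HC N⁆‖ * ‖ψ‖ := Matrix.l2_opNorm_mulVec _ ψ
    _ = ‖⁅HB N, HC N⁆‖ := by rw [hψn, mul_one]
end

section
/- Fix N ≥ 3, let H_B be the MCS battery Hamiltonian on N+1 qubits, and let φ be the product state |+z⟩₀ ⊗ |+x⟩^{⊗N}, i.e. the unit vector φ f = if f 0 = 0 then (2:ℂ)^(-(N:ℝ)/2) else 0. Then star φ ⬝ᵥ (H_B.mulVec φ) = 0 and star φ ⬝ᵥ ((H_B * H_B).mulVec φ) = N^2 + N, so the energy variance of H_B in the state φ equals N² + N and scales quadratically with system size. -/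
open scoped Matrix.Norms.L2Operator
open scoped Matrix

noncomputable def prodOp {N : ℕ} (P : Fin (N+1) → Matrix (Fin 2) (Fin 2) ℂ) :
    Matrix (Fin (N + 1) → Fin 2) (Fin (N + 1) → Fin 2) ℂ :=
  fun f g => ∏ k, P k (f k) (g k)

lemma sum_pi_prod {n : ℕ} (F : Fin n → Fin 2 → ℂ) :
    (∑ h : Fin n → Fin 2, ∏ k, F k (h k)) = ∏ k, ∑ a, F k a :=
  (Fintype.prod_sum _).symm

lemma prodOp_mul {N : ℕ} (P Q : Fin (N+1) → Matrix (Fin 2) (Fin 2) ℂ) :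
    prodOp P * prodOp Q = prodOp (fun k => P k * Q k) := by
  ext f g
  simp only [Matrix.mul_apply, prodOp, ← Finset.prod_mul_distrib]
  exact sum_pi_prod fun k b => P k (f k) b * Q k b (g k)

lemma siteOp_eq_prodOp {N : ℕ} (P : Matrix (Fin 2) (Fin 2) ℂ) (j : Fin (N+1)) :
    siteOp P j = prodOp (Function.update (fun _ => (1 : Matrix (Fin 2) (Fin 2) ℂ)) j P) := by
  ext f g
  unfold siteOp prodOp
  rw [← Finset.mul_prod_erase Finset.univ _ (Finset.mem_univ j), Function.update_self]
  congr 1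
  refine Finset.prod_congr rfl fun k hk => ?_
  rw [Function.update_of_ne (Finset.mem_erase.mp hk).1, Matrix.one_apply]

noncomputable def cC : ℂ := (((2:ℝ) ^ (-(1:ℝ)/2) : ℝ) : ℂ)

noncomputable def ψv (N : ℕ) (k : Fin (N+1)) : Fin 2 → ℂ :=
  if k = 0 then ![1,0] else ![cC, cC]

lemma cC_mul : cC * cC = 1/2 := by
  unfold cC
  rw [← Complex.ofReal_mul, ← Real.rpow_add (by norm_num)]
  have h : (-(1:ℝ)/2 + -(1:ℝ)/2) = -1 := by norm_num
  rw [h, Real.rpow_neg_one]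
  norm_num

lemma vec2_const (a : Fin 2) : ![cC, cC] a = cC := by
  fin_cases a <;> simp

lemma φprod_eq (N : ℕ) (f : Fin (N+1) → Fin 2) :
    φprod N f = ∏ k, ψv N k (f k) := by
  rw [← Finset.mul_prod_erase Finset.univ _ (Finset.mem_univ (0 : Fin (N+1)))]
  have herase : ∏ k ∈ Finset.univ.erase (0 : Fin (N+1)), ψv N k (f k) = cC ^ N := by
    have h1 : ∀ k ∈ Finset.univ.erase (0 : Fin (N+1)), ψv N k (f k) = cC := by
      intro k hk
      rw [ψv, if_neg (Finset.mem_erase.mp hk).1, vec2_const]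
    rw [Finset.prod_congr rfl h1, Finset.prod_const,
      Finset.card_erase_of_mem (Finset.mem_univ _), Finset.card_univ, Fintype.card_fin]
    simp
  rw [herase]
  have hcN : cC ^ N = (((2:ℝ) ^ (-(N : ℝ) / 2) : ℝ) : ℂ) := by
    unfold cC
    rw [← Complex.ofReal_pow, ← Real.rpow_natCast ((2:ℝ) ^ (-(1:ℝ)/2)) N,
      ← Real.rpow_mul (by norm_num)]
    ring_nf
  rw [hcN]
  simp only [ψv, if_pos rfl, φprod]
  rcases (by decide : ∀ x : Fin 2, x = 0 ∨ x = 1) (f 0) with h | h <;> rw [h] <;> simp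

noncomputable def eE (N : ℕ) (k : Fin (N+1)) (P : Matrix (Fin 2) (Fin 2) ℂ) : ℂ :=
  ∑ a, ∑ b, (starRingEnd ℂ) (ψv N k a) * P a b * ψv N k b

lemma expect (N : ℕ) (P : Fin (N+1) → Matrix (Fin 2) (Fin 2) ℂ) :
    star (φprod N) ⬝ᵥ ((prodOp P).mulVec (φprod N)) = ∏ k, eE N k (P k) := by
  have key : star (φprod N) ⬝ᵥ ((prodOp P).mulVec (φprod N))
      = ∑ f : Fin (N+1) → Fin 2, ∑ g : Fin (N+1) → Fin 2,
          ∏ k, (starRingEnd ℂ) (ψv N k (f k)) * P k (f k) (g k) * ψv N k (g k) := by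
    simp only [Matrix.mulVec, dotProduct, prodOp, Pi.star_apply, Complex.star_def,
      Finset.mul_sum]
    refine Finset.sum_congr rfl fun f _ => Finset.sum_congr rfl fun g _ => ?_
    rw [φprod_eq, φprod_eq, map_prod]
    rw [Finset.prod_mul_distrib, Finset.prod_mul_distrib]
    ring
  rw [key]
  have h1 : ∀ f : Fin (N+1) → Fin 2,
      (∑ g : Fin (N+1) → Fin 2,
        ∏ k, (starRingEnd ℂ) (ψv N k (f k)) * P k (f k) (g k) * ψv N k (g k))
      = ∏ k, ∑ b, (starRingEnd ℂ) (ψv N k (f k)) * P k (f k) b * ψv N k b :=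
    fun f => sum_pi_prod fun k b => (starRingEnd ℂ) (ψv N k (f k)) * P k (f k) b * ψv N k b
  simp only [h1]
  exact sum_pi_prod fun k a => ∑ b, (starRingEnd ℂ) (ψv N k a) * P k a b * ψv N k b

lemma sx_sq : σx * σx = 1 := by
  rw [σx, show (1 : Matrix (Fin 2) (Fin 2) ℂ) = !![1,0;0,1] by rw [Matrix.one_fin_two]]
  norm_num [Matrix.mul_fin_two]

lemma sz_sq : σz * σz = 1 := by
  rw [σz, show (1 : Matrix (Fin 2) (Fin 2) ℂ) = !![1,0;0,1] by rw [Matrix.one_fin_two]]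
  norm_num [Matrix.mul_fin_two]

lemma conj_cC : (starRingEnd ℂ) cC = cC := Complex.conj_ofReal _

lemma eE_one (N : ℕ) (k : Fin (N+1)) : eE N k 1 = 1 := by
  by_cases hk : k = 0
  · simp [eE, ψv, hk, Fin.sum_univ_two, Matrix.one_apply]
  · simp [eE, ψv, hk, Fin.sum_univ_two, Matrix.one_apply, conj_cC]
    rw [cC_mul]; norm_num

lemma eE_sx_zero (N : ℕ) : eE N 0 σx = 0 := by
  simp [eE, ψv, σx, Fin.sum_univ_two]

lemma eE_sx (N : ℕ) (k : Fin (N+1)) (hk : k ≠ 0) : eE N k σx = 1 := by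
  simp [eE, ψv, hk, σx, Fin.sum_univ_two, conj_cC]
  rw [cC_mul]; norm_num

lemma eE_sz (N : ℕ) (k : Fin (N+1)) (hk : k ≠ 0) : eE N k σz = 0 := by
  simp [eE, ψv, hk, σz, Fin.sum_univ_two, conj_cC]


-- Fin arithmetic
lemma per_ne_zero {N : ℕ} (i : Fin N) : per i ≠ 0 := Fin.succ_ne_zero i

lemma perS_ne_zero {N : ℕ} (i : Fin N) : perS i ≠ 0 := by
  simp [perS, Fin.ext_iff]

lemma per_inj {N : ℕ} {i j : Fin N} (h : per i = per j) : i = j := by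
  have := Fin.val_eq_of_eq h
  simp [per, Fin.val_succ] at this
  exact Fin.ext this

lemma per_ne_perS {N : ℕ} (hN : 2 ≤ N) (i : Fin N) : per i ≠ perS i := by
  intro h
  have hv : i.1 + 1 = (i.1 + 1) % N + 1 := by
    simpa [per, perS, Fin.ext_iff, Fin.val_succ] using h
  have hi := i.2
  rcases Nat.lt_or_ge (i.1 + 1) N with h1 | h1
  · rw [Nat.mod_eq_of_lt h1] at hv
    omega
  · have he : i.1 + 1 = N := by omega
    rw [he, Nat.mod_self] at hv
    omega

lemma not_cross {N : ℕ} (hN : 3 ≤ N) {i j : Fin N} (hij : i ≠ j) :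
    per i ≠ perS j ∨ per j ≠ perS i := by
  by_contra hc
  push_neg at hc
  obtain ⟨h1, h2⟩ := hc
  have e1 : i.1 = (j.1 + 1) % N := by
    have := Fin.val_eq_of_eq h1; simpa [per, perS, Fin.val_succ] using this
  have e2 : j.1 = (i.1 + 1) % N := by
    have := Fin.val_eq_of_eq h2; simpa [per, perS, Fin.val_succ] using this
  have hi := i.2; have hj := j.2
  have hne : i.1 ≠ j.1 := fun hv => hij (Fin.ext hv)
  rcases Nat.lt_or_ge (i.1 + 1) N with hA | hA
  · rw [Nat.mod_eq_of_lt hA] at e2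
    rcases Nat.lt_or_ge (j.1 + 1) N with hB | hB
    · rw [Nat.mod_eq_of_lt hB] at e1; omega
    · have hBe : j.1 + 1 = N := by omega
      rw [hBe, Nat.mod_self] at e1; omega
  · have hAe : i.1 + 1 = N := by omega
    rw [hAe, Nat.mod_self] at e2
    rw [e2] at e1
    rw [Nat.mod_eq_of_lt (show 0 + 1 < N by omega)] at e1
    omega

-- term functions
noncomputable def fA (N : ℕ) (i : Fin N) : Fin (N+1) → Matrix (Fin 2) (Fin 2) ℂ :=
  fun k => Function.update (fun _ => 1) (0 : Fin (N+1)) σx k *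
    Function.update (fun _ => 1) (per i) σx k

noncomputable def fB (N : ℕ) (i : Fin N) : Fin (N+1) → Matrix (Fin 2) (Fin 2) ℂ :=
  fun k => Function.update (fun _ => 1) (per i) σz k *
    Function.update (fun _ => 1) (perS i) σz k

lemma HB_eq (N : ℕ) : HB N = (∑ i, prodOp (fA N i)) + ∑ i, prodOp (fB N i) := by
  unfold HB
  congr 1 <;> refine Finset.sum_congr rfl fun i _ => ?_ <;>
    rw [siteOp_eq_prodOp, siteOp_eq_prodOp, prodOp_mul] <;> rfl

-- factor computations
lemma eE_fA_mul (N : ℕ) (i j : Fin N) (k : Fin (N+1)) :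
    eE N k (fA N i k * fA N j k) = 1 := by
  by_cases h0 : k = 0
  · subst h0
    simp [fA, Function.update_apply, Ne.symm (per_ne_zero i), Ne.symm (per_ne_zero j),
      sx_sq, eE_one]
  · by_cases hi : k = per i
    · subst hi
      by_cases hj : per i = per j
      · simp [fA, Function.update_apply, per_ne_zero i, per_ne_zero j, hj, sx_sq, eE_one]
      · simp [fA, Function.update_apply, per_ne_zero i, hj, sx_sq, eE_one,
          eE_sx N (per i) h0]
    · by_cases hj : k = per j
      · subst hj
        simp [fA, Function.update_apply, per_ne_zero j, hi, sx_sq, eE_one,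
          eE_sx N (per j) h0]
      · simp [fA, Function.update_apply, h0, hi, hj, eE_one]

lemma eE_fB_sq (N : ℕ) (hN : 3 ≤ N) (i : Fin N) (k : Fin (N+1)) :
    eE N k (fB N i k * fB N i k) = 1 := by
  by_cases hp : k = per i
  · subst hp
    simp [fB, Function.update_apply, per_ne_perS (show 2 ≤ N by omega) i, sz_sq, eE_one]
  · by_cases hs : k = perS i
    · subst hs
      simp [fB, Function.update_apply, hp, sz_sq, eE_one]
    · simp [fB, Function.update_apply, hp, hs, eE_one]

lemma prod_fB_offdiag (N : ℕ) (hN : 3 ≤ N) {i j : Fin N} (hij : i ≠ j) :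
    ∏ k, eE N k (fB N i k * fB N j k) = 0 := by
  have hpp : per i ≠ per j := fun h => hij (per_inj h)
  rcases not_cross hN hij with h | h
  · refine Finset.prod_eq_zero (Finset.mem_univ (per i)) ?_
    simp [fB, Function.update_apply, per_ne_perS (show 2 ≤ N by omega) i, hpp, h,
      eE_sz N (per i) (per_ne_zero i)]
  · refine Finset.prod_eq_zero (Finset.mem_univ (per j)) ?_
    simp [fB, Function.update_apply, per_ne_perS (show 2 ≤ N by omega) j, hpp.symm, h,
      eE_sz N (per j) (per_ne_zero j)]

lemma prod_fA_fB (N : ℕ) (i j : Fin N) :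
    ∏ k, eE N k (fA N i k * fB N j k) = 0 := by
  refine Finset.prod_eq_zero (Finset.mem_univ (0 : Fin (N+1))) ?_
  simp [fA, fB, Function.update_apply, Ne.symm (per_ne_zero i), Ne.symm (per_ne_zero j),
    Ne.symm (perS_ne_zero j), eE_sx_zero]

lemma prod_fB_fA (N : ℕ) (i j : Fin N) :
    ∏ k, eE N k (fB N j k * fA N i k) = 0 := by
  refine Finset.prod_eq_zero (Finset.mem_univ (0 : Fin (N+1))) ?_
  simp [fA, fB, Function.update_apply, Ne.symm (per_ne_zero i), Ne.symm (per_ne_zero j),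
    Ne.symm (perS_ne_zero j), eE_sx_zero]

lemma prod_fA_single (N : ℕ) (i : Fin N) : ∏ k, eE N k (fA N i k) = 0 := by
  refine Finset.prod_eq_zero (Finset.mem_univ (0 : Fin (N+1))) ?_
  simp [fA, Function.update_apply, Ne.symm (per_ne_zero i), eE_sx_zero]

lemma prod_fB_single (N : ℕ) (hN : 3 ≤ N) (i : Fin N) : ∏ k, eE N k (fB N i k) = 0 := by
  refine Finset.prod_eq_zero (Finset.mem_univ (per i)) ?_
  simp [fB, Function.update_apply, per_ne_perS (show 2 ≤ N by omega) i,
    eE_sz N (per i) (per_ne_zero i)]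

-- linearity of the expectation
lemma mulVec_sum {N : ℕ} {ι : Type*} (s : Finset ι)
    (M : ι → Matrix (Fin (N+1) → Fin 2) (Fin (N+1) → Fin 2) ℂ)
    (v : (Fin (N+1) → Fin 2) → ℂ) :
    (∑ i ∈ s, M i).mulVec v = ∑ i ∈ s, (M i).mulVec v := by
  ext f
  simp [Matrix.mulVec, dotProduct, Matrix.sum_apply, Finset.sum_mul]
  exact Finset.sum_comm

lemma dot_sum {N : ℕ} {ι : Type*} (s : Finset ι)
    (M : ι → Matrix (Fin (N+1) → Fin 2) (Fin (N+1) → Fin 2) ℂ)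
    (v : (Fin (N+1) → Fin 2) → ℂ) :
    star v ⬝ᵥ ((∑ i ∈ s, M i).mulVec v) = ∑ i ∈ s, star v ⬝ᵥ ((M i).mulVec v) := by
  rw [mulVec_sum]
  simp [dotProduct, Finset.sum_apply, Finset.mul_sum]
  exact Finset.sum_comm

/-- In the product state `|+z⟩₀ ⊗ |+x⟩^{⊗N}`, the MCS battery
Hamiltonian has vanishing mean and second moment `N² + N`, so its energy
variance equals `N² + N` and scales quadratically with system size. -/
theorem mcs_battery_variance (N : ℕ) (hN : 3 ≤ N) :
    star (φprod N) ⬝ᵥ ((HB N).mulVec (φprod N)) = 0 ∧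
    star (φprod N) ⬝ᵥ (((HB N) * (HB N)).mulVec (φprod N))
      = (N : ℂ) ^ 2 + (N : ℂ) := by
  constructor
  · rw [HB_eq, Matrix.add_mulVec, dotProduct_add, dot_sum, dot_sum]
    simp only [expect]
    rw [Finset.sum_congr rfl fun i _ => prod_fA_single N i,
      Finset.sum_congr rfl fun i _ => prod_fB_single N hN i]
    simp
  · rw [HB_eq]
    rw [add_mul, mul_add, mul_add]
    have hexp : ∀ (F G : Fin N → Fin (N+1) → Matrix (Fin 2) (Fin 2) ℂ),
        (∑ i, prodOp (F i)) * (∑ j, prodOp (G j))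
          = ∑ i, ∑ j, prodOp (fun k => F i k * G j k) := by
      intro F G
      rw [Finset.sum_mul_sum]
      exact Finset.sum_congr rfl fun i _ => Finset.sum_congr rfl fun j _ => prodOp_mul _ _
    rw [hexp, hexp, hexp, hexp]
    rw [Matrix.add_mulVec, dotProduct_add, Matrix.add_mulVec, dotProduct_add,
      Matrix.add_mulVec, dotProduct_add]
    rw [dot_sum, dot_sum, dot_sum, dot_sum]
    simp only [dot_sum, expect]
    have hAA : ∀ i : Fin N, (∑ j : Fin N, ∏ k, eE N k (fA N i k * fA N j k)) = (N : ℂ) := by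
      intro i
      rw [Finset.sum_congr rfl fun j _ => Finset.prod_congr rfl fun k _ => eE_fA_mul N i j k]
      simp
    have hAB : ∀ i : Fin N, (∑ j : Fin N, ∏ k, eE N k (fA N i k * fB N j k)) = 0 := by
      intro i
      rw [Finset.sum_congr rfl fun j _ => prod_fA_fB N i j]
      simp
    have hBA : ∀ i : Fin N, (∑ j : Fin N, ∏ k, eE N k (fB N i k * fA N j k)) = 0 := by
      intro i
      rw [Finset.sum_congr rfl fun j _ => prod_fB_fA N j i]
      simp
    have hBB : ∀ i : Fin N, (∑ j : Fin N, ∏ k, eE N k (fB N i k * fB N j k)) = 1 := by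
      intro i
      rw [Finset.sum_eq_single i]
      · rw [Finset.prod_congr rfl fun k _ => eE_fB_sq N hN i k]
        simp
      · intro j _ hji
        exact prod_fB_offdiag N hN fun h => hji (h.symm)
      · intro h
        exact absurd (Finset.mem_univ i) h
    rw [Finset.sum_congr rfl fun i _ => hAA i, Finset.sum_congr rfl fun i _ => hAB i,
      Finset.sum_congr rfl fun i _ => hBA i, Finset.sum_congr rfl fun i _ => hBB i]
    simp
    ring
end
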